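/- arXiv:1403.7980 — 7 statements merged into one kernel-verified Lean document; each statement's English description precedes it below -/
import Mathlib

section
/- Let d ≥ 2, let X be a sequence of d−1 points of ℝ^d, and let s, t ∈ ℝ^d be such that S := X∘s and T := X∘t satisfy ⟦S⟧ ≠ 0 and ⟦T⟧ ≠ 0. Then the creasing on X satisfies c(h(S), h(T), X) = [T∘s]/(⟦T⟧·⟦S⟧), i.e. (z_T(π(s)) − z_S(π(s)))/⟦S⟧ = [T∘s]/(⟦T⟧·⟦S⟧). -/
/-- `[S]`: determinant of the k×k matrix whose columns are the points of `S`
with an appended final entry 1. -/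
noncomputable def mdet {k : ℕ} (S : Fin k → (Fin (k - 1) → ℝ)) : ℝ :=
  Matrix.det (Matrix.of (fun i j : Fin k =>
    if h : (i : ℕ) < k - 1 then S j ⟨i, h⟩ else 1))

/-- `π`: deletion of the last coordinate. -/
def projZ {d : ℕ} (p : Fin d → ℝ) : Fin (d - 1) → ℝ :=
  fun i => p (Fin.castLE (Nat.sub_le d 1) i)

/-- `⟦S⟧ = [π(S)]` for a sequence of d points of ℝ^d. -/
noncomputable def pdet {d : ℕ} (S : Fin d → (Fin d → ℝ)) : ℝ :=
  mdet (fun i => projZ (S i))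

/-- last ('z') coordinate of a point of ℝ^d. -/
def zc {d : ℕ} (q : Fin d → ℝ) : ℝ :=
  if h : 0 < d then q ⟨d - 1, by omega⟩ else 0

/-- `(p, z)`: point of ℝ^d obtained from `p ∈ ℝ^{d-1}` by appending `z`. -/
def liftPt {d : ℕ} (p : Fin (d - 1) → ℝ) (z : ℝ) : Fin d → ℝ :=
  fun i => if h : (i : ℕ) < d - 1 then p ⟨i, h⟩ else z

/-- concatenation `X ∘ s` of a sequence of `k-1` points with one more point. -/
def snoc' {α : Type*} {k : ℕ} (X : Fin (k - 1) → α) (s : α) : Fin k → α :=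
  fun i => if h : (i : ℕ) < k - 1 then X ⟨i, h⟩ else s

lemma stmt2_key {d : ℕ} (hd : 2 ≤ d) (X : Fin (d - 1) → (Fin d → ℝ)) (t s : Fin d → ℝ)
    (zT : (Fin (d - 1) → ℝ) →ᵃ[ℝ] ℝ)
    (hzT : ∀ i, zT (projZ (snoc' X t i)) = zc (snoc' X t i)) :
    mdet (snoc' (k := d + 1) (snoc' X t) s)
      = (zT (projZ s) - zc s) * pdet (snoc' X t) := by
  have hd0 : 0 < d := by omega
  set P : Fin (d + 1) → (Fin d → ℝ) := snoc' (k := d + 1) (snoc' X t) s with hP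
  set M : Matrix (Fin (d + 1)) (Fin (d + 1)) ℝ :=
    Matrix.of (fun i j : Fin (d + 1) => if h : (i : ℕ) < d then P j ⟨i, h⟩ else 1) with hM
  have hmdet : mdet (snoc' (k := d + 1) (snoc' X t) s) = M.det := rfl
  set a : Fin (d - 1) → ℝ := fun i => zT.linear (fun j => if i = j then (1 : ℝ) else 0) with ha
  have hzTdecomp : ∀ p, zT p = (∑ i, p i * a i) + zT 0 := by
    intro p
    have h1 : zT p = zT.linear p + zT 0 := by
      have := zT.map_vadd 0 p
      simpa [vadd_eq_add] using this
    rw [h1]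
    congr 1
    conv_lhs => rw [pi_eq_sum_univ p, map_sum]
    refine Finset.sum_congr rfl fun i _ => ?_
    rw [map_smul]
    simp [ha, smul_eq_mul, mul_comm]
  set i₀ : Fin (d + 1) := ⟨d - 1, by omega⟩ with hi₀
  set r : Fin (d + 1) → ℝ := fun j => zc (P j) - zT (projZ (P j)) with hr
  set c : Fin (d + 1) → ℝ := fun j =>
    if h : (j : ℕ) < d - 1 then a ⟨j, h⟩ else if (j : ℕ) = d then zT 0 else 0 with hc
  have hci₀ : c i₀ = 0 := by
    simp only [hc, hi₀]
    rw [dif_neg (by omega)]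
    rw [if_neg (by omega)]
  -- sum splitting helper
  have hsplit : ∀ G : Fin (d + 1) → ℝ,
      ∑ j, G j = (∑ i : Fin (d - 1), G ⟨i.val, by omega⟩) + G i₀ + G (Fin.last d) := by
    intro G
    have hne : i₀ ≠ Fin.last d := Fin.ne_of_val_ne (by simp [hi₀]; omega)
    rw [← Finset.sum_compl_add_sum ({i₀, Fin.last d} : Finset (Fin (d + 1))) G,
      Finset.sum_pair hne, add_assoc]
    congr 1
    have hmem : ∀ x : Fin (d + 1),
        x ∈ ({i₀, Fin.last d} : Finset (Fin (d + 1)))ᶜ ↔ (x : ℕ) < d - 1 := by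
      intro x
      have := x.isLt
      simp only [Finset.mem_compl, Finset.mem_insert, Finset.mem_singleton, not_or,
        Fin.ext_iff, hi₀, Fin.val_last]
      omega
    refine Finset.sum_bij' (fun x hx => (⟨x.val, (hmem x).1 hx⟩ : Fin (d - 1)))
      (fun b _ => (⟨b.val, by omega⟩ : Fin (d + 1))) (fun x hx => Finset.mem_univ _)
      (fun b hb => (hmem _).2 (by simpa using b.isLt)) (fun x hx => Fin.ext rfl)
      (fun b hb => Fin.ext rfl) (fun x hx => by congr 1)
  -- the key row identity
  have hrow : M i₀ = r + ∑ j, c j • M j := by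
    funext col
    have hMi₀ : M i₀ col = zc (P col) := by
      simp only [hM, Matrix.of_apply, hi₀]
      rw [dif_pos (by omega)]
      rw [zc, dif_pos hd0]
    have hsum : (∑ j, c j • M j) col = (∑ i, projZ (P col) i * a i) + zT 0 := by
      rw [Finset.sum_apply]
      rw [hsplit (fun j => (c j • M j) col)]
      have h1 : (c i₀ • M i₀) col = 0 := by rw [hci₀]; simp
      have h2 : (c (Fin.last d) • M (Fin.last d)) col = zT 0 := by
        simp only [hc, hM, Pi.smul_apply, Matrix.of_apply, Fin.val_last, smul_eq_mul]
        rw [dif_neg (by omega)]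
        norm_num
      rw [h1, h2, add_zero]
      congr 1
      refine Finset.sum_congr rfl fun i _ => ?_
      have hilt : (i : ℕ) < d - 1 := i.isLt
      simp only [hc, hM, Pi.smul_apply, Matrix.of_apply, smul_eq_mul]
      rw [dif_pos hilt, dif_pos (by omega : (i : ℕ) < d), mul_comm]
      rfl
    rw [Pi.add_apply, hsum, hMi₀]
    simp only [hr]
    rw [hzTdecomp (projZ (P col))]
    ring
  -- row reduction
  have hdet1 : M.det = (M.updateRow i₀ r).det := by
    conv_lhs => rw [← M.updateRow_eq_self i₀, hrow]
    rw [Matrix.det_updateRow_add, Matrix.det_updateRow_sum, hci₀]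
    simp
  -- evaluate r
  have hrlt : ∀ j : Fin (d + 1), (j : ℕ) < d → r j = 0 := by
    intro j hj
    have hPj : P j = snoc' X t ⟨j, hj⟩ := by
      simp only [hP, snoc']
      rw [dif_pos (by omega : (j : ℕ) < d + 1 - 1)]
      rfl
    simp only [hr]
    simp only [hPj]
    rw [hzT ⟨j, hj⟩, sub_self]
  have hrlast : r (Fin.last d) = zc s - zT (projZ s) := by
    have hPl : P (Fin.last d) = s := by
      simp only [hP, snoc']
      rw [dif_neg (by simp : ¬ ((Fin.last d : Fin (d + 1)) : ℕ) < d + 1 - 1)]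
    simp only [hr, hPl]
  -- cofactor expansion
  set M' := M.updateRow i₀ r with hM'
  have hminor : (M'.submatrix i₀.succAbove (Fin.last d).succAbove)
      = Matrix.of (fun i j : Fin d =>
          if h : (i : ℕ) < d - 1 then projZ (snoc' X t j) ⟨i, h⟩ else 1) := by
    ext i j
    simp only [Matrix.submatrix_apply, Fin.succAbove_last, Matrix.of_apply]
    by_cases h : (i : ℕ) < d - 1
    · rw [dif_pos h]
      rw [Fin.succAbove_of_castSucc_lt i₀ i (by simp [hi₀, Fin.lt_def]; omega)]
      rw [hM', Matrix.updateRow_ne (by simp [hi₀, Fin.ext_iff]; omega)]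
      simp only [hM, Matrix.of_apply, Fin.coe_castSucc]
      rw [dif_pos (by omega : (i : ℕ) < d)]
      have hPc : P (Fin.castSucc j) = snoc' X t j := by
        simp only [hP, snoc']
        rw [dif_pos (by simpa using j.isLt : ((Fin.castSucc j : Fin (d + 1)) : ℕ) < d + 1 - 1)]
        rfl
      rw [hPc]
      rfl
    · rw [dif_neg h]
      rw [Fin.succAbove_of_le_castSucc i₀ i (by simp [hi₀, Fin.le_def]; omega)]
      rw [hM', Matrix.updateRow_ne (by simp [hi₀, Fin.ext_iff]; omega)]
      simp only [hM, Matrix.of_apply, Fin.val_succ]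
      rw [dif_neg (by omega)]
  have hminordet : (M'.submatrix i₀.succAbove (Fin.last d).succAbove).det
      = pdet (snoc' X t) := by
    rw [hminor]; rfl
  have hM'i₀ : M' i₀ = r := by rw [hM']; exact Matrix.updateRow_self
  have hdet2 : M'.det = (zT (projZ s) - zc s) * pdet (snoc' X t) := by
    rw [Matrix.det_succ_row M' i₀]
    rw [Finset.sum_eq_single (Fin.last d)]
    · simp only [hM'i₀]
      rw [hrlast, hminordet]
      have hsign : (-1 : ℝ) ^ ((i₀ : ℕ) + ((Fin.last d : Fin (d + 1)) : ℕ)) = -1 := by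
        have hodd : Odd ((i₀ : ℕ) + ((Fin.last d : Fin (d + 1)) : ℕ)) := by
          simp only [hi₀, Fin.val_last]
          exact ⟨d - 1, by omega⟩
        exact hodd.neg_one_pow
      rw [hsign]
      ring
    · intro j _ hj
      have hjd : (j : ℕ) < d := by
        have h1 := j.isLt
        have h2 : (j : ℕ) ≠ d := fun h => hj (Fin.ext (by simp [h]))
        omega
      simp only [hM'i₀]
      rw [hrlt j hjd]
      ring
    · intro h
      exact absurd (Finset.mem_univ _) h
  rw [hmdet, hdet1, hdet2]

/-- Equation (3): for a sequence `X` of `d-1` points of ℝ^d and points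
`s, t` with `S := X∘s`, `T := X∘t`, `⟦S⟧ ≠ 0 ≠ ⟦T⟧`, the creasing on `X` satisfies
`c(h(S), h(T), X) = [T∘s]/(⟦T⟧·⟦S⟧)`. -/
theorem stmt2 {d : ℕ} (hd : 2 ≤ d) (X : Fin (d - 1) → (Fin d → ℝ)) (s t : Fin d → ℝ)
    (hS : pdet (snoc' X s) ≠ 0) (hT : pdet (snoc' X t) ≠ 0)
    (zS zT : (Fin (d - 1) → ℝ) →ᵃ[ℝ] ℝ)
    (hzS : ∀ i, zS (projZ (snoc' X s i)) = zc (snoc' X s i))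
    (hzT : ∀ i, zT (projZ (snoc' X t i)) = zc (snoc' X t i)) :
    (zT (projZ s) - zS (projZ s)) / pdet (snoc' X s) =
      mdet (snoc' (k := d + 1) (snoc' X t) s) / (pdet (snoc' X t) * pdet (snoc' X s)) := by
  have hkey := stmt2_key hd X t s zT hzT
  have hs : zS (projZ s) = zc s := by
    have h := hzS ⟨d - 1, by omega⟩
    have hx : snoc' X s ⟨d - 1, by omega⟩ = s := by
      simp only [snoc']
      rw [dif_neg (by simp)]
    rwa [hx] at h
  rw [hkey, hs]
  rw [mul_comm (pdet (snoc' X t)) (pdet (snoc' X s)), mul_div_mul_right _ _ hT]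
end

section
/- Let d ≥ 2, let X be a sequence of d−1 points of ℝ^d, and let s, t ∈ ℝ^d be such that S := X∘s and T := X∘t satisfy ⟦S⟧ ≠ 0 and ⟦T⟧ ≠ 0. Then the creasing is antisymmetric in the two hyperplanes: c(h(S), h(T), X) = −c(h(T), h(S), X), i.e. (z_T(π(s)) − z_S(π(s)))/⟦S⟧ = −(z_S(π(t)) − z_T(π(t)))/⟦T⟧. -/
/-- Lemma 2(a): the creasing is antisymmetric in the two hyperplanes:
`c(h(S), h(T), X) = −c(h(T), h(S), X)`. -/
theorem stmt3 {d : ℕ} (hd : 2 ≤ d) (X : Fin (d - 1) → (Fin d → ℝ)) (s t : Fin d → ℝ)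
    (hS : pdet (snoc' X s) ≠ 0) (hT : pdet (snoc' X t) ≠ 0)
    (zS zT : (Fin (d - 1) → ℝ) →ᵃ[ℝ] ℝ)
    (hzS : ∀ i, zS (projZ (snoc' X s i)) = zc (snoc' X s i))
    (hzT : ∀ i, zT (projZ (snoc' X t i)) = zc (snoc' X t i)) :
    (zT (projZ s) - zS (projZ s)) / pdet (snoc' X s) =
      -((zS (projZ t) - zT (projZ t)) / pdet (snoc' X t)) := by
  have hd1 : 0 < d := by omega
  set lastI : Fin d := ⟨d - 1, by omega⟩ with hlastI
  set g : (Fin (d - 1) → ℝ) →ᵃ[ℝ] ℝ := zT - zS with hg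
  -- g vanishes on the projected X points
  have hgX : ∀ h : Fin (d - 1), g (projZ (X h)) = 0 := by
    intro h
    have h1 := hzS ⟨h, by omega⟩
    have h2 := hzT ⟨h, by omega⟩
    have hs : snoc' X s ⟨(h : ℕ), by omega⟩ = X h := by
      simp [snoc', h.isLt]
    have ht : snoc' X t ⟨(h : ℕ), by omega⟩ = X h := by
      simp [snoc', h.isLt]
    rw [hs] at h1; rw [ht] at h2
    simp only [hg, AffineMap.coe_sub, Pi.sub_apply, h1, h2, sub_self]
  -- matrix M of S
  set M : Matrix (Fin d) (Fin d) ℝ :=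
    Matrix.of (fun i j : Fin d =>
      if h : (i : ℕ) < d - 1 then projZ (snoc' X s j) ⟨i, h⟩ else 1) with hM
  have hdetM : M.det = pdet (snoc' X s) := rfl
  -- columns of M
  set v : Fin d → (Fin d → ℝ) := fun j i => M i j with hv
  -- linear functional from determinant in last column
  set G' : (Fin d → ℝ) →ₗ[ℝ] ℝ :=
    { toFun := fun x => (M.updateCol lastI x).det
      map_add' := fun x y => Matrix.det_updateCol_add M lastI x y
      map_smul' := fun c x => Matrix.det_updateCol_smul M lastI c x } with hG'
  -- linear functional from g
  set G : (Fin d → ℝ) →ₗ[ℝ] ℝ :=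
    { toFun := fun x => g.linear (fun i => x (Fin.castLE (Nat.sub_le d 1) i)) + g 0 * x lastI
      map_add' := fun x y => by
        simp only [Pi.add_apply]
        rw [show (fun i => x (Fin.castLE (Nat.sub_le d 1) i) + y (Fin.castLE (Nat.sub_le d 1) i))
          = (fun i => x (Fin.castLE (Nat.sub_le d 1) i)) + (fun i => y (Fin.castLE (Nat.sub_le d 1) i)) from rfl,
          map_add]
        ring
      map_smul' := fun c x => by
        simp only [Pi.smul_apply, smul_eq_mul, RingHom.id_apply]
        rw [show (fun i => c * x (Fin.castLE (Nat.sub_le d 1) i))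
          = c • (fun i => x (Fin.castLE (Nat.sub_le d 1) i)) from rfl, map_smul]
        simp [smul_eq_mul]; ring } with hGdef
  -- G applied to a lifted point (p, 1) equals g p
  have hGlift : ∀ p : Fin (d - 1) → ℝ, G (fun i => if h : (i : ℕ) < d - 1 then p ⟨i, h⟩ else 1) = g p := by
    intro p
    have hdec : g p = g.linear p + g 0 := by
      have := g.map_vadd 0 p
      simpa [vadd_eq_add] using this
    simp only [hGdef, LinearMap.coe_mk, AddHom.coe_mk]
    have h1 : (fun i : Fin (d - 1) => if h : ((Fin.castLE (Nat.sub_le d 1) i : Fin d) : ℕ) < d - 1 then p ⟨_, h⟩ else (1:ℝ)) = p := by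
      funext i
      simp [i.isLt]
    have h2 : ¬ ((lastI : ℕ) < d - 1) := by simp [hlastI]
    rw [dif_neg h2]
    rw [show (fun i : Fin (d-1) => if h : ((Fin.castLE (Nat.sub_le d 1) i : Fin d) : ℕ) < d - 1 then p ⟨_, h⟩ else (1:ℝ)) = p from h1]
    rw [hdec]; ring
  -- columns of M as lifted points
  have hvj : ∀ j : Fin d, v j = (fun i : Fin d => if h : (i : ℕ) < d - 1 then projZ (snoc' X s j) ⟨i, h⟩ else 1) := by
    intro j; rfl
  -- G vanishes on v j for j ≠ last
  have hGvj : ∀ j : Fin d, (j : ℕ) < d - 1 → G (v j) = 0 := by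
    intro j hj
    rw [hvj j, hGlift]
    have : snoc' X s j = X ⟨j, hj⟩ := by simp [snoc', hj]
    rw [this]
    exact hgX _
  have hG'vj : ∀ j : Fin d, (j : ℕ) < d - 1 → G' (v j) = 0 := by
    intro j hj
    have hne : lastI ≠ j := by
      intro h
      have := congrArg Fin.val h
      simp only [hlastI] at this
      omega
    exact Matrix.det_updateCol_eq_zero hne.symm
  have hG'vs : G' (v lastI) = pdet (snoc' X s) := by
    show (M.updateCol lastI (fun i => M i lastI)).det = _
    rw [Matrix.updateCol_eq_self, hdetM]
  -- value of G' on lifted t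
  have hG'vt : G' (fun i => if h : (i : ℕ) < d - 1 then projZ t ⟨i, h⟩ else 1) = pdet (snoc' X t) := by
    show (M.updateCol lastI _).det = _
    have : M.updateCol lastI (fun i => if h : (i : ℕ) < d - 1 then projZ t ⟨i, h⟩ else 1)
        = Matrix.of (fun i j : Fin d =>
          if h : (i : ℕ) < d - 1 then projZ (snoc' X t j) ⟨i, h⟩ else 1) := by
      ext i j
      by_cases hj : j = lastI
      · subst hj
        rw [Matrix.updateCol_self]
        have hjlt : ¬ ((lastI : ℕ) < d - 1) := by simp [hlastI]
        have : snoc' X t lastI = t := by simp [snoc', hjlt]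
        simp only [Matrix.of_apply, this]
      · rw [Matrix.updateCol_ne hj]
        have hjlt : (j : ℕ) < d - 1 := by
          have := j.isLt
          rcases Nat.lt_or_ge (j : ℕ) (d - 1) with h | h
          · exact h
          · exfalso; apply hj; apply Fin.ext; simp [hlastI]; omega
        simp only [hM, Matrix.of_apply]
        have hsj : snoc' X s j = X ⟨j, hjlt⟩ := by simp [snoc', hjlt]
        have htj : snoc' X t j = X ⟨j, hjlt⟩ := by simp [snoc', hjlt]
        rw [hsj, htj]
    rw [this]; rfl
  -- linear independence of columns
  have hli : LinearIndependent ℝ v := by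
    have : IsUnit M := by
      rw [Matrix.isUnit_iff_isUnit_det, hdetM]
      exact isUnit_iff_ne_zero.mpr hS
    exact Matrix.linearIndependent_cols_iff_isUnit.mpr this
  -- basis
  have hcard : Fintype.card (Fin d) = Module.finrank ℝ (Fin d → ℝ) := by
    simp
  haveI : Nonempty (Fin d) := ⟨lastI⟩
  set b := basisOfLinearIndependentOfCardEqFinrank hli hcard with hb
  have hbcoe : ⇑b = v := coe_basisOfLinearIndependentOfCardEqFinrank hli hcard
  -- G = μ • G'
  set μ : ℝ := g (projZ s) / pdet (snoc' X s) with hμ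
  have hGG' : G = μ • G' := by
    apply b.ext
    intro j
    rw [hbcoe]
    by_cases hj : (j : ℕ) < d - 1
    · rw [hGvj j hj, LinearMap.smul_apply, hG'vj j hj, smul_zero]
    · have hjl : j = lastI := by
        apply Fin.ext; simp [hlastI]; omega
      subst hjl
      rw [LinearMap.smul_apply, hG'vs, smul_eq_mul, hμ]
      have hvs : v lastI = (fun i : Fin d => if h : (i : ℕ) < d - 1 then projZ s ⟨i, h⟩ else 1) := by
        funext i
        show M i lastI = _
        simp only [hM, Matrix.of_apply]
        have : snoc' X s lastI = s := by simp [snoc', hlastI]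
        rw [this]
      rw [hvs, hGlift]
      field_simp
  -- evaluate at lifted t
  have hgt : g (projZ t) = μ * pdet (snoc' X t) := by
    have this := LinearMap.congr_fun hGG'
      (fun i : Fin d => if h : (i : ℕ) < d - 1 then projZ t ⟨i, h⟩ else 1)
    rw [LinearMap.smul_apply] at this
    rw [← hGlift (projZ t)]
    rw [this, hG'vt]; simp [smul_eq_mul]
  -- finish
  have hgs : g (projZ s) = zT (projZ s) - zS (projZ s) := by
    simp only [hg, AffineMap.coe_sub, Pi.sub_apply]
  have hgt' : g (projZ t) = zT (projZ t) - zS (projZ t) := by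
    simp only [hg, AffineMap.coe_sub, Pi.sub_apply]
  have key : g (projZ s) / pdet (snoc' X s) = g (projZ t) / pdet (snoc' X t) := by
    rw [hgt, hμ]
    field_simp
  rw [← hgs, key, hgt']
  ring
end

section
/- Let d ≥ 2, let X be a sequence of d−1 points of ℝ^d, and let s, t ∈ ℝ^d be such that S := X∘s and T := X∘t satisfy ⟦S⟧ ≠ 0 and ⟦T⟧ ≠ 0. The creasing on X is independent of the choice of the point completing S: if s' ∈ ℝ^d lies on the hyperplane h(S) (equivalently [S∘s'] = 0) and ⟦X∘s'⟧ ≠ 0, then (z_T(π(s')) − z_S(π(s')))/⟦X∘s'⟧ = (z_T(π(s)) − z_S(π(s)))/⟦S⟧. -/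
/- ======================= auxiliary material ======================= -/

open Matrix

/-- the matrix whose determinant is `mdet (snoc' Y p)`. -/
private noncomputable def cmat {d : ℕ} (Y : Fin (d - 1) → (Fin (d - 1) → ℝ))
    (p : Fin (d - 1) → ℝ) : Matrix (Fin d) (Fin d) ℝ :=
  Matrix.of (fun i j : Fin d =>
    if h : (i : ℕ) < d - 1 then (snoc' Y p) j ⟨i, h⟩ else 1)

private lemma mdet_cmat {d : ℕ} (Y : Fin (d - 1) → (Fin (d - 1) → ℝ)) (p : Fin (d - 1) → ℝ) :
    mdet (snoc' Y p) = (cmat Y p).det := rfl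

/-- columns of `cmat`. -/
private lemma cmat_col {d : ℕ} (Y : Fin (d - 1) → (Fin (d - 1) → ℝ)) (p : Fin (d - 1) → ℝ)
    (i j : Fin d) :
    cmat Y p i j = if h : (j : ℕ) < d - 1 then liftPt (Y ⟨j, h⟩) 1 i else liftPt p 1 i := by
  by_cases hj : (j : ℕ) < d - 1 <;> by_cases hi : (i : ℕ) < d - 1 <;>
    simp [cmat, snoc', liftPt, hi, hj]

/-- linear functional vanishing on the columns of an invertible matrix is zero. -/
private lemma lin_zero {m : ℕ} (M : Matrix (Fin m) (Fin m) ℝ) (hM : M.det ≠ 0)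
    (G : (Fin m → ℝ) →ₗ[ℝ] ℝ) (h : ∀ j, G (fun i => M i j) = 0) (q : Fin m → ℝ) :
    G q = 0 := by
  have hq : M *ᵥ (M⁻¹ *ᵥ q) = q := by
    rw [Matrix.mulVec_mulVec, Matrix.mul_nonsing_inv _ (isUnit_iff_ne_zero.mpr hM),
      Matrix.one_mulVec]
  have hsum : ∀ w : Fin m → ℝ, M *ᵥ w = ∑ j, w j • (fun i => M i j) := by
    intro w
    funext i
    simp [Matrix.mulVec, dotProduct, Finset.sum_apply, mul_comm]
  rw [← hq, hsum, map_sum]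
  simp [h]

/-- homogenization of an affine functional. -/
private noncomputable def zhom {d : ℕ} (hd : 1 ≤ d) (z : (Fin (d - 1) → ℝ) →ᵃ[ℝ] ℝ) :
    (Fin d → ℝ) →ₗ[ℝ] ℝ :=
  z.linear ∘ₗ LinearMap.funLeft ℝ ℝ (Fin.castLE (Nat.sub_le d 1)) +
    z 0 • LinearMap.proj (⟨d - 1, by omega⟩ : Fin d)

private lemma projZ_liftPt {d : ℕ} (p : Fin (d - 1) → ℝ) (z : ℝ) :
    projZ (liftPt p z) = p := by
  funext i
  have h : ((Fin.castLE (Nat.sub_le d 1) i : Fin d) : ℕ) < d - 1 := i.isLt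
  simp [projZ, liftPt, h]

private lemma zhom_liftPt {d : ℕ} (hd : 1 ≤ d) (z : (Fin (d - 1) → ℝ) →ᵃ[ℝ] ℝ)
    (p : Fin (d - 1) → ℝ) :
    zhom hd z (liftPt p 1) = z p := by
  have h1 : (LinearMap.funLeft ℝ ℝ (Fin.castLE (Nat.sub_le d 1))) (liftPt p (1:ℝ)) = p :=
    projZ_liftPt p 1
  have h2 : liftPt p (1:ℝ) ⟨d - 1, by omega⟩ = 1 := by
    simp [liftPt]
  simp only [zhom, LinearMap.add_apply, LinearMap.comp_apply, h1, LinearMap.smul_apply,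
    LinearMap.proj_apply, h2, smul_eq_mul, mul_one]
  conv_rhs => rw [AffineMap.decomp z]
  simp

/-- Lemma 2(b): the creasing on `X` does not depend on the choice of the
point completing `S`: if `s'` lies on the hyperplane `h(S)` and `⟦X∘s'⟧ ≠ 0`, then
`(z_T(π(s')) − z_S(π(s')))/⟦X∘s'⟧ = (z_T(π(s)) − z_S(π(s)))/⟦S⟧`. -/
theorem stmt4 {d : ℕ} (hd : 2 ≤ d) (X : Fin (d - 1) → (Fin d → ℝ)) (s t : Fin d → ℝ)
    (hS : pdet (snoc' X s) ≠ 0) (hT : pdet (snoc' X t) ≠ 0)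
    (zS zT : (Fin (d - 1) → ℝ) →ᵃ[ℝ] ℝ)
    (hzS : ∀ i, zS (projZ (snoc' X s i)) = zc (snoc' X s i))
    (hzT : ∀ i, zT (projZ (snoc' X t i)) = zc (snoc' X t i))
    (s' : Fin d → ℝ)
    (hs' : zS (projZ s') = zc s')
    (hS' : pdet (snoc' X s') ≠ 0) :
    (zT (projZ s') - zS (projZ s')) / pdet (snoc' X s') =
      (zT (projZ s) - zS (projZ s)) / pdet (snoc' X s) := by
  have hd1 : 1 ≤ d := by omega
  set Y : Fin (d - 1) → (Fin (d - 1) → ℝ) := fun j => projZ (X j) with hY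
  -- pdet via cmat
  have hpdet : ∀ u : Fin d → ℝ, pdet (snoc' X u) = (cmat Y (projZ u)).det := by
    intro u
    have hc : (fun i => projZ (snoc' X u i)) = snoc' Y (projZ u) := by
      funext i
      simp only [snoc', hY]
      split <;> rfl
    rw [pdet, hc, mdet_cmat]
  set lst : Fin d := ⟨d - 1, by omega⟩ with hlst
  -- any cmat is an update of the cmat of s
  have hupd : ∀ p : Fin (d - 1) → ℝ,
      cmat Y p = (cmat Y (projZ s)).updateCol lst (liftPt p 1) := by
    intro p
    ext i j
    rw [Matrix.updateCol_apply]
    by_cases hj : j = lst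
    · have hj' : ¬ ((j : ℕ) < d - 1) := by rw [hj]; simp [hlst]
      rw [if_pos hj, cmat_col, dif_neg hj']
    · have hj' : (j : ℕ) < d - 1 := by
        have := j.isLt
        have : (j : ℕ) ≠ d - 1 := fun h => hj (Fin.ext (by simp [hlst, h]))
        omega
      rw [if_neg hj, cmat_col, cmat_col, dif_pos hj', dif_pos hj']
  -- the determinant functional updating the last column
  set D : (Fin d → ℝ) →ₗ[ℝ] ℝ :=
    { toFun := fun q => ((cmat Y (projZ s)).updateCol lst q).det
      map_add' := fun u v => Matrix.det_updateCol_add _ lst u v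
      map_smul' := fun a u => by
        simpa using Matrix.det_updateCol_smul (cmat Y (projZ s)) lst a u } with hD
  set A : ℝ := pdet (snoc' X s) with hA
  set c : ℝ := zT (projZ s) - zS (projZ s) with hc
  set G : (Fin d → ℝ) →ₗ[ℝ] ℝ := A • (zhom hd1 zT - zhom hd1 zS) - c • D with hG
  have hGapp : ∀ q, G q = A * (zhom hd1 zT q - zhom hd1 zS q) - c * D q := by
    intro q; simp [hG]
  have hdet : (cmat Y (projZ s)).det ≠ 0 := by rw [← hpdet s]; exact hS
  -- G vanishes on all columns
  have hGcol : ∀ j : Fin d, G (fun i => cmat Y (projZ s) i j) = 0 := by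
    intro j
    by_cases hj : (j : ℕ) < d - 1
    · have hcolj : (fun i => cmat Y (projZ s) i j) = liftPt (Y ⟨j, hj⟩) 1 := by
        funext i; rw [cmat_col, dif_pos hj]
      have hXj : snoc' X s j = X ⟨j, hj⟩ := by rw [snoc', dif_pos hj]
      have hXj' : snoc' X t j = X ⟨j, hj⟩ := by rw [snoc', dif_pos hj]
      have hzSj : zS (Y ⟨j, hj⟩) = zc (X ⟨j, hj⟩) := by
        have := hzS j; rwa [hXj] at this
      have hzTj : zT (Y ⟨j, hj⟩) = zc (X ⟨j, hj⟩) := by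
        have := hzT j; rwa [hXj'] at this
      have hDj : D (liftPt (Y ⟨j, hj⟩) 1) = 0 := by
        have : liftPt (Y ⟨j, hj⟩) 1 = fun i => cmat Y (projZ s) i j := hcolj.symm
        show ((cmat Y (projZ s)).updateCol lst (liftPt (Y ⟨j, hj⟩) 1)).det = 0
        rw [this]
        exact Matrix.det_updateCol_eq_zero (fun h => by
          have := congrArg Fin.val h; simp [hlst] at this; omega)
      rw [hcolj, hGapp, zhom_liftPt, zhom_liftPt, hzSj, hzTj, hDj]
      ring
    · have hjl : j = lst := Fin.ext (by have := j.isLt; simp [hlst]; omega)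
      have hcolj : (fun i => cmat Y (projZ s) i j) = liftPt (projZ s) 1 := by
        funext i; rw [cmat_col, dif_neg hj]
      have hDj : D (liftPt (projZ s) 1) = A := by
        show ((cmat Y (projZ s)).updateCol lst (liftPt (projZ s) 1)).det = A
        rw [← hupd (projZ s), ← hpdet s]
      rw [hcolj, hGapp, zhom_liftPt, zhom_liftPt, hDj]
      rw [hc]; ring
  have hGzero : ∀ q, G q = 0 := lin_zero _ hdet G hGcol
  -- evaluate at the lift of projZ s'
  have key := hGzero (liftPt (projZ s') 1)
  rw [hGapp, zhom_liftPt, zhom_liftPt] at key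
  have hD' : D (liftPt (projZ s') 1) = pdet (snoc' X s') := by
    show ((cmat Y (projZ s)).updateCol lst (liftPt (projZ s') 1)).det = _
    rw [← hupd (projZ s'), ← hpdet s']
  rw [hD'] at key
  have hA0 : A ≠ 0 := hS
  field_simp
  rw [hc] at key
  linear_combination key
end

section
/- Let d ≥ 2, let D = (d_1, …, d_d) be a sequence of d points of ℝ^d with ⟦D⟧ ≠ 0, let ζ > 0, let r ∈ ℝ^{d−1}, and let p := (r, z_D(r) + ζ) ∈ ℝ^d be the point stacked with vertical shift ζ above the hyperplane h(D). Set X := (d_1, …, d_{d−2})∘p, S := X∘d_{d−1} and T := X∘d_d, and assume ⟦S⟧ ≠ 0 and ⟦T⟧ ≠ 0. Then the absolute value of the creasing on the interior ridge X equals ζ·|⟦D⟧|/(|⟦S⟧|·|⟦T⟧|), i.e. |(z_T(π(d_{d−1})) − z_S(π(d_{d−1})))/⟦S⟧| = ζ·|⟦D⟧/(⟦S⟧·⟦T⟧)|. -/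
/-- Lemma 6, interior ridges: stacking `p = (r, z_D(r) + ζ)` with `ζ > 0`
above the facet spanned by `D = (d_1, …, d_d)` produces, on the interior ridge
`X := (d_1, …, d_{d-2}) ∘ p`, a creasing of absolute value `ζ·|⟦D⟧/(⟦S⟧·⟦T⟧)|`, where
`S := X ∘ d_{d-1}` and `T := X ∘ d_d`. -/
theorem stmt6 {d : ℕ} (hd : 2 ≤ d) (D : Fin d → (Fin d → ℝ)) (hD : pdet D ≠ 0)
    (ζ : ℝ) (hζ : 0 < ζ) (r : Fin (d - 1) → ℝ)
    (zD : (Fin (d - 1) → ℝ) →ᵃ[ℝ] ℝ)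
    (hzD : ∀ i, zD (projZ (D i)) = zc (D i))
    (X : Fin (d - 1) → (Fin d → ℝ))
    (hX : X = snoc' (k := d - 1)
      (fun i : Fin (d - 1 - 1) => D (Fin.castLE (by omega) i)) (liftPt r (zD r + ζ)))
    (hS : pdet (snoc' X (D ⟨d - 2, by omega⟩)) ≠ 0)
    (hT : pdet (snoc' X (D ⟨d - 1, by omega⟩)) ≠ 0)
    (zS zT : (Fin (d - 1) → ℝ) →ᵃ[ℝ] ℝ)
    (hzS : ∀ i, zS (projZ (snoc' X (D ⟨d - 2, by omega⟩) i)) =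
      zc (snoc' X (D ⟨d - 2, by omega⟩) i))
    (hzT : ∀ i, zT (projZ (snoc' X (D ⟨d - 1, by omega⟩) i)) =
      zc (snoc' X (D ⟨d - 1, by omega⟩) i)) :
    |(zT (projZ (D ⟨d - 2, by omega⟩)) - zS (projZ (D ⟨d - 2, by omega⟩))) /
        pdet (snoc' X (D ⟨d - 2, by omega⟩))| =
      ζ * |pdet D / (pdet (snoc' X (D ⟨d - 2, by omega⟩)) *
        pdet (snoc' X (D ⟨d - 1, by omega⟩)))| := by
  have hd1 : 1 ≤ d - 1 := by omega
  set a : Fin (d - 1) → ℝ := projZ (D ⟨d - 2, by omega⟩) with ha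
  set Sq := snoc' X (D ⟨d - 2, by omega⟩) with hSq
  set Tq := snoc' X (D ⟨d - 1, by omega⟩) with hTq
  -- z_S at a equals z_D at a
  have hlast : ¬ ((d - 1 : ℕ) < d - 1) := by omega
  have hSa : zS a = zD a := by
    have h1 := hzS ⟨d - 1, by omega⟩
    have h2 := hzD ⟨d - 2, by omega⟩
    simp only [hSq, snoc', hlast, dif_neg, not_false_iff] at h1
    rw [ha, h1, h2]
  -- the linear functional φ
  set c : ℝ := zT 0 - zD 0 with hc
  set φ : (Fin d → ℝ) →ₗ[ℝ] ℝ :=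
    (zT.linear - zD.linear).comp
      (LinearMap.funLeft ℝ ℝ (fun i : Fin (d - 1) => Fin.castLE (by omega) i))
      + c • LinearMap.proj (⟨d - 1, by omega⟩ : Fin d) with hφ
  -- φ on lifted points
  have F0 : ∀ q : Fin (d - 1) → ℝ,
      φ (fun i : Fin d => if h : (i : ℕ) < d - 1 then q ⟨i, h⟩ else 1) = zT q - zD q := by
    intro q
    simp only [hφ, LinearMap.add_apply, LinearMap.comp_apply,
      LinearMap.smul_apply, LinearMap.proj_apply, smul_eq_mul]
    have hq : (LinearMap.funLeft ℝ ℝ (fun i : Fin (d - 1) =>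
          (Fin.castLE (by omega : d - 1 ≤ d) i)))
        (fun i : Fin d => if h : (i : ℕ) < d - 1 then q ⟨i, h⟩ else 1) = q := by
      funext i
      simp only [LinearMap.funLeft_apply, Fin.coe_castLE, i.isLt, dif_pos]
    rw [hq]
    simp only [hlast, dif_neg, not_false_iff, mul_one]
    have eT : zT q = zT.linear q + zT 0 := by
      conv_lhs => rw [AffineMap.decomp zT]
      simp
    have eD : zD q = zD.linear q + zD 0 := by
      conv_lhs => rw [AffineMap.decomp zD]
      simp
    rw [eT, eD]
    simp only [LinearMap.sub_apply, hc]
    ring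
  -- the matrix of T and the vector u
  set M : Matrix (Fin d) (Fin d) ℝ := Matrix.of (fun i j : Fin d =>
    if h : (i : ℕ) < d - 1 then projZ (Tq j) ⟨i, h⟩ else 1) with hM
  have hMdet : M.det = pdet Tq := rfl
  set u : Fin d → ℝ := fun i => if h : (i : ℕ) < d - 1 then a ⟨i, h⟩ else 1 with hu
  -- values of the creasing function on the columns of M
  have hzDzc : ∀ i : Fin d, zc (D i) = zD (projZ (D i)) := fun i => (hzD i).symm
  have Fval : ∀ j : Fin d, zT (projZ (Tq j)) - zD (projZ (Tq j)) =
      if (j : ℕ) = d - 2 then ζ else 0 := by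
    intro j
    have hT1 := hzT j
    by_cases hj2 : (j : ℕ) = d - 2
    · -- T j = p
      have hTj : Tq j = liftPt r (zD r + ζ) := by
        simp only [hTq, snoc', hX]
        have : (j : ℕ) < d - 1 := by omega
        rw [dif_pos this]
        have : ¬ ((j : ℕ) < d - 1 - 1) := by omega
        rw [dif_neg this]
      have hproj : projZ (Tq j) = r := by
        funext i
        simp only [hTj, projZ, liftPt, Fin.coe_castLE, i.isLt, dif_pos]
      have hzcp : zc (Tq j) = zD r + ζ := by
        simp only [hTj, zc, liftPt]
        rw [dif_pos (by omega : 0 < d), dif_neg hlast]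
      rw [hproj] at hT1
      rw [hproj, hT1, hzcp, if_pos hj2]
      ring
    · rw [if_neg hj2]
      rcases Nat.lt_or_ge (j : ℕ) (d - 2) with hj | hj
      · have hTj : Tq j = D ⟨j, by omega⟩ := by
          simp only [hTq, snoc', hX]
          rw [dif_pos (by omega : (j : ℕ) < d - 1), dif_pos (by omega : (j : ℕ) < d - 1 - 1)]
          exact congrArg D (Fin.eq_of_val_eq rfl)
        rw [hTj] at hT1 ⊢
        rw [hT1, hzDzc]
        ring
      · have hjv : (j : ℕ) = d - 1 := by omega
        have hTj : Tq j = D ⟨d - 1, by omega⟩ := by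
          simp only [hTq, snoc']
          rw [dif_neg (by omega : ¬ ((j : ℕ) < d - 1))]
        rw [hTj] at hT1 ⊢
        rw [hT1, hzDzc]
        ring
  -- updateColumn gives the matrix of D
  have hupd : (M.updateCol ⟨d - 2, by omega⟩ u).det = pdet D := by
    have : M.updateCol ⟨d - 2, by omega⟩ u = Matrix.of (fun i j : Fin d =>
        if h : (i : ℕ) < d - 1 then projZ (D j) ⟨i, h⟩ else 1) := by
      ext i j
      rw [Matrix.updateCol_apply]
      by_cases hj : j = (⟨d - 2, by omega⟩ : Fin d)
      · rw [if_pos hj, hu, hj]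
        simp only [ha, Matrix.of_apply]
      · rw [if_neg hj, hM]
        simp only [Matrix.of_apply]
        have hjne : (j : ℕ) ≠ d - 2 := fun h => hj (Fin.ext h)
        by_cases hi : (i : ℕ) < d - 1
        · rw [dif_pos hi, dif_pos hi]
          rcases Nat.lt_or_ge (j : ℕ) (d - 2) with hjl | hjg
          · have hTj : Tq j = D j := by
              simp only [hTq, snoc', hX]
              rw [dif_pos (by omega : (j : ℕ) < d - 1),
                dif_pos (by omega : (j : ℕ) < d - 1 - 1)]
              exact congrArg D (Fin.eq_of_val_eq rfl)
            rw [hTj]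
          · have hTj : Tq j = D j := by
              simp only [hTq, snoc']
              rw [dif_neg (by omega : ¬ ((j : ℕ) < d - 1))]
              exact congrArg D (Fin.eq_of_val_eq (by have := j.isLt; simp only [Fin.val_mk] at *; omega))
            rw [hTj]
        · rw [dif_neg hi, dif_neg hi]
    rw [this]
    rfl
  -- the key identity
  have key : (zT a - zD a) * pdet Tq = ζ * pdet D := by
    have hφu : φ u = zT a - zD a := F0 a
    have hmv : M.mulVec (M.cramer u) = M.det • u := Matrix.mulVec_cramer M u
    have hsum : M.mulVec (M.cramer u) = ∑ j, M.cramer u j • (fun i => M i j) := by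
      funext i
      rw [Matrix.mulVec, Finset.sum_apply]
      simp only [Pi.smul_apply, smul_eq_mul, dotProduct]
      exact Finset.sum_congr rfl (fun j _ => mul_comm _ _)
    have hcol : ∀ j : Fin d, φ (fun i => M i j) = if (j : ℕ) = d - 2 then ζ else 0 := by
      intro j
      have : (fun i => M i j) =
          (fun i : Fin d => if h : (i : ℕ) < d - 1 then projZ (Tq j) ⟨i, h⟩ else 1) := by
        funext i; simp [hM]
      rw [this, F0, Fval]
    calc (zT a - zD a) * M.det = M.det * φ u := by rw [hφu]; ring
      _ = φ (M.det • u) := by rw [map_smul, smul_eq_mul]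
      _ = φ (M.mulVec (M.cramer u)) := by rw [hmv]
      _ = ∑ j, M.cramer u j * φ (fun i => M i j) := by
          rw [hsum, map_sum]
          exact Finset.sum_congr rfl (fun j _ => by rw [map_smul, smul_eq_mul])
      _ = ∑ j, M.cramer u j * (if (j : ℕ) = d - 2 then ζ else 0) := by
          exact Finset.sum_congr rfl (fun j _ => by rw [hcol])
      _ = M.cramer u ⟨d - 2, by omega⟩ * ζ := by
          rw [Finset.sum_eq_single (⟨d - 2, by omega⟩ : Fin d)]
          · simp
          · intro b _ hb
            rw [if_neg (fun h => hb (Fin.ext h)), mul_zero]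
          · simp
      _ = ζ * pdet D := by rw [Matrix.cramer_apply, hupd]; ring
  -- finish
  rw [hSa]
  have hvv : zT a - zD a = ζ * pdet D / pdet Tq := by
    field_simp
    linarith [key]
  have hv : (zT a - zD a) / pdet Sq = ζ * (pdet D / (pdet Sq * pdet Tq)) := by
    rw [hvv]
    field_simp
  rw [hv, abs_mul, abs_of_pos hζ]
end

section
/- Let d ≥ 2, L > 0 and α > 0. Let X = (x_1, …, x_d) be a sequence of points of ℝ^{d−1}, each lying in the simplex Δ := {y ∈ ℝ^{d−1} : y_i ≥ 0 for all i and y_1 + ⋯ + y_{d−1} ≤ L}, and let X' = (x'_1, …, x'_d) be points of ℝ^{d−1} obtained by rounding each coordinate down by at most α while staying nonnegative, i.e. 0 ≤ (x'_j)_i ≤ (x_j)_i and (x_j)_i − (x'_j)_i ≤ α for all i and j. Then |[X] − [X']| ≤ α·d²·L^{d−2}. -/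
lemma permBound {n : ℕ} (A : Matrix (Fin n) (Fin n) ℝ) (h : ∀ i j, 0 ≤ A i j) :
    |A.det| ≤ ∏ j, ∑ i, A i j := by
  have h1 : |A.det| ≤ ∑ σ : Equiv.Perm (Fin n), ∏ i, A (σ i) i := by
    rw [Matrix.det_apply']
    refine (Finset.abs_sum_le_sum_abs _ _).trans_eq ?_
    refine Finset.sum_congr rfl fun σ _ => ?_
    rcases Int.units_eq_one_or (Equiv.Perm.sign σ) with hs | hs <;>
      simp [hs, abs_of_nonneg, Finset.prod_nonneg fun i _ => h _ _]
  refine h1.trans ?_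
  have h2 : ∏ j, ∑ i, A i j = ∑ f : Fin n → Fin n, ∏ j, A (f j) j := by
    rw [Finset.prod_univ_sum]
    simp [Fintype.piFinset_univ]
  rw [h2]
  have h3 : ∑ σ : Equiv.Perm (Fin n), ∏ i, A (σ i) i
      = ∑ f ∈ Finset.univ.image (fun σ : Equiv.Perm (Fin n) => ⇑σ), ∏ i, A (f i) i := by
    rw [Finset.sum_image]
    intro a _ b _ hab
    exact Equiv.coe_fn_injective hab
  rw [h3]
  refine Finset.sum_le_sum_of_subset_of_nonneg (Finset.subset_univ _) fun f _ _ => ?_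
  exact Finset.prod_nonneg fun i _ => h _ _

lemma simplexDetBound {n : ℕ} {L : ℝ} (hL : 0 < L) (A : Matrix (Fin (n+1)) (Fin (n+1)) ℝ)
    (h1 : ∀ j, A (Fin.last n) j = 1)
    (hnn : ∀ i j, 0 ≤ A i j)
    (hsum : ∀ j, ∑ i ∈ Finset.univ.erase (Fin.last n), A i j ≤ L) :
    |A.det| ≤ L ^ n := by
  set c : Fin (n+1) → ℝ := fun i => if i = Fin.last n then L else -1 with hc
  set A' := A.updateRow (Fin.last n) (∑ k, c k • A k) with hA'
  have hdet : A'.det = L * A.det := by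
    rw [hA', Matrix.det_updateRow_sum, hc]
    simp
  have hrow : ∀ j, A' (Fin.last n) j = L - ∑ i ∈ Finset.univ.erase (Fin.last n), A i j := by
    intro j
    rw [hA', Matrix.updateRow_self]
    have : (∑ k, c k • A k) j = ∑ k, c k * A k j := by simp
    rw [this, ← Finset.add_sum_erase _ _ (Finset.mem_univ (Fin.last n))]
    have hcl : c (Fin.last n) = L := if_pos rfl
    rw [hcl, h1, mul_one, sub_eq_add_neg, ← Finset.sum_neg_distrib]
    congr 1
    refine Finset.sum_congr rfl fun i hi => ?_
    have : c i = -1 := if_neg (Finset.ne_of_mem_erase hi)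
    rw [this]; ring
  have hrow' : ∀ i j, i ≠ Fin.last n → A' i j = A i j := by
    intro i j hi
    rw [hA', Matrix.updateRow_ne hi]
  have hbound : |A'.det| ≤ ∏ _j : Fin (n+1), L := by
    have := permBound A' (fun i j => ?_)
    · refine this.trans_eq (Finset.prod_congr rfl fun j _ => ?_)
      rw [← Finset.add_sum_erase _ _ (Finset.mem_univ (Fin.last n)), hrow j]
      rw [Finset.sum_congr rfl fun i hi => hrow' i j (Finset.ne_of_mem_erase hi)]
      ring
    · rcases eq_or_ne i (Fin.last n) with rfl | hi
      · rw [hrow]; linarith [hsum j]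
      · rw [hrow' i j hi]; exact hnn i j
  rw [hdet, abs_mul, abs_of_pos hL] at hbound
  simp only [Finset.prod_const, Finset.card_univ, Fintype.card_fin] at hbound
  rw [pow_succ] at hbound
  have : L * |A.det| ≤ L * L ^ n := by
    calc L * |A.det| ≤ L ^ n * L := hbound
      _ = L * L ^ n := by ring
  exact le_of_mul_le_mul_left this hL

lemma colStep {n : ℕ} {L α : ℝ} (hL : 0 < L) (hα : 0 < α)
    (B : Matrix (Fin (n+2)) (Fin (n+2)) ℝ) (jm : Fin (n+2)) (v : Fin (n+2) → ℝ)
    (hB1 : ∀ j, B (Fin.last (n+1)) j = 1)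
    (hBnn : ∀ i j, 0 ≤ B i j)
    (hBsum : ∀ j, ∑ i ∈ Finset.univ.erase (Fin.last (n+1)), B i j ≤ L)
    (hv : ∀ i, |v i| ≤ α) (hvlast : v (Fin.last (n+1)) = 0) :
    |(B.updateCol jm v).det| ≤ (n+1) * (α * L ^ n) := by
  -- minor bound
  have hminor : ∀ i : Fin (n+2), i ≠ Fin.last (n+1) →
      |(B.submatrix i.succAbove jm.succAbove).det| ≤ L ^ n := by
    intro i hi
    have hile : i ≤ Fin.castSucc (Fin.last n) := by
      have : (i : ℕ) < n + 1 := by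
        rcases Fin.lt_or_eq_of_le (Fin.le_last i) with h | h
        · exact Fin.lt_iff_val_lt_val.mp h
        · exact absurd h hi
      exact Fin.le_def.mpr (by simpa using Nat.lt_succ_iff.mp this)
    refine simplexDetBound hL _ (fun q => ?_) (fun p q => hBnn _ _) (fun q => ?_)
    · have : i.succAbove (Fin.last n) = Fin.last (n+1) := by
        rw [Fin.succAbove_of_le_castSucc _ _ hile, Fin.succ_last]
      simp [Matrix.submatrix_apply, this, hB1]
    · -- column sum bound
      have hinj : Set.InjOn i.succAbove ↑(Finset.univ.erase (Fin.last n)) :=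
        fun a _ b _ hab => Fin.succAbove_right_injective hab
      calc ∑ p ∈ Finset.univ.erase (Fin.last n), B (i.succAbove p) (jm.succAbove q)
          = ∑ r ∈ (Finset.univ.erase (Fin.last n)).image i.succAbove,
              B r (jm.succAbove q) := by
            rw [Finset.sum_image (fun a _ b _ hab => Fin.succAbove_right_injective hab)]
        _ ≤ ∑ r ∈ Finset.univ.erase (Fin.last (n+1)), B r (jm.succAbove q) := by
            refine Finset.sum_le_sum_of_subset_of_nonneg ?_ (fun r _ _ => hBnn _ _)
            intro r hr
            simp only [Finset.mem_image, Finset.mem_erase, Finset.mem_univ, and_true] at hr ⊢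
            obtain ⟨p, hp, rfl⟩ := hr
            intro hcontra
            have : i.succAbove p = i.succAbove (Fin.last n) := by
              rw [hcontra, Fin.succAbove_of_le_castSucc _ _ hile, Fin.succ_last]
            exact hp (Fin.succAbove_right_injective this)
        _ ≤ L := hBsum _
  rw [Matrix.det_succ_column _ jm]
  refine (Finset.abs_sum_le_sum_abs _ _).trans ?_
  have hterm : ∀ i : Fin (n+2),
      |(-1 : ℝ) ^ ((i : ℕ) + (jm : ℕ)) * (B.updateCol jm v) i jm
        * ((B.updateCol jm v).submatrix i.succAbove jm.succAbove).det|
      ≤ if i = Fin.last (n+1) then 0 else α * L ^ n := by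
    intro i
    have hsub : (B.updateCol jm v).submatrix i.succAbove jm.succAbove
        = B.submatrix i.succAbove jm.succAbove := by
      ext p q
      simp only [Matrix.submatrix_apply]
      exact Matrix.updateCol_ne (Fin.succAbove_ne jm q)
    rw [abs_mul, abs_mul, abs_pow, abs_neg, abs_one, one_pow, one_mul,
      Matrix.updateCol_self, hsub]
    by_cases hi : i = Fin.last (n+1)
    · simp [hi, hvlast]
    · rw [if_neg hi]
      exact mul_le_mul (hv i) (hminor i hi) (abs_nonneg _) hα.le
  refine (Finset.sum_le_sum fun i _ => hterm i).trans ?_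
  rw [← Finset.add_sum_erase _ _ (Finset.mem_univ (Fin.last (n+1))), if_pos rfl, zero_add]
  rw [Finset.sum_congr rfl (fun i hi => if_neg (Finset.ne_of_mem_erase hi)),
    Finset.sum_const, Finset.card_erase_of_mem (Finset.mem_univ _), Finset.card_univ,
    Fintype.card_fin, nsmul_eq_mul]
  push_cast
  ring_nf
  exact le_refl _


/-- matrix of a configuration, concrete sizes -/
def MM {n : ℕ} (S : Fin (n+2) → (Fin (n+1) → ℝ)) : Matrix (Fin (n+2)) (Fin (n+2)) ℝ :=
  Matrix.of (fun i j => if h : (i : ℕ) < n + 1 then S j ⟨i, h⟩ else 1)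

lemma mdet_eq {n : ℕ} (S : Fin (n+2) → (Fin (n+2-1) → ℝ)) : mdet S = (MM S).det := rfl

lemma MM_props {n : ℕ} {L : ℝ} (S : Fin (n+2) → (Fin (n+1) → ℝ))
    (hSnn : ∀ j i, 0 ≤ S j i) (hSsum : ∀ j, ∑ i, S j i ≤ L) :
    (∀ j, MM S (Fin.last (n+1)) j = 1) ∧ (∀ i j, 0 ≤ MM S i j) ∧
    (∀ j, ∑ i ∈ Finset.univ.erase (Fin.last (n+1)), MM S i j ≤ L) := by
  refine ⟨fun j => ?_, fun i j => ?_, fun j => ?_⟩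
  · simp [MM]
  · simp only [MM, Matrix.of_apply]
    split
    · exact hSnn _ _
    · norm_num
  · have hterm : ∀ p : Fin (n+1), MM S p.castSucc j = S j p := by
      intro p
      have hp : ((p.castSucc : Fin (n+2)) : ℕ) < n + 1 := p.isLt
      simp only [MM, Matrix.of_apply, dif_pos hp]
      exact congrArg (S j) (Fin.ext rfl)
    have hlast : MM S (Fin.last (n+1)) j = 1 := by simp [MM]
    have htot : MM S (Fin.last (n+1)) j + ∑ i ∈ Finset.univ.erase (Fin.last (n+1)), MM S i j
        = ∑ i : Fin (n+2), MM S i j :=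
      Finset.add_sum_erase Finset.univ (fun i => MM S i j) (Finset.mem_univ _)
    have hsum2 : ∑ i : Fin (n+2), MM S i j = ∑ p : Fin (n+1), S j p + 1 := by
      rw [Fin.sum_univ_castSucc (f := fun i => MM S i j), hlast]
      rw [Finset.sum_congr rfl fun p _ => hterm p]
    have key : ∑ i ∈ Finset.univ.erase (Fin.last (n+1)), MM S i j = ∑ p : Fin (n+1), S j p := by
      rw [hlast] at htot; linarith [htot, hsum2]
    rw [key]; exact hSsum j


/-- Lemma 8: rounding each coordinate of the `d` points of `X ⊆ Δ` down
by at most `α` (staying nonnegative) changes `[X]` by at most `α·d²·L^{d-2}`. -/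
theorem stmt8 (d : ℕ) (hd : 2 ≤ d) (L α : ℝ) (hL : 0 < L) (hα : 0 < α)
    (X X' : Fin d → (Fin (d - 1) → ℝ))
    (hXnn : ∀ j i, 0 ≤ X j i) (hXsum : ∀ j, ∑ i, X j i ≤ L)
    (hnn : ∀ j i, 0 ≤ X' j i) (hle : ∀ j i, X' j i ≤ X j i)
    (hα' : ∀ j i, X j i - X' j i ≤ α) :
    |mdet X - mdet X'| ≤ α * d ^ 2 * L ^ (d - 2) := by
  obtain ⟨n, rfl⟩ : ∃ n, d = n + 2 := ⟨d - 2, by omega⟩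
  -- the telescoping sequence
  set Y : ℕ → Fin (n+2) → (Fin (n+1) → ℝ) :=
    fun m j => if (j : ℕ) < m then X' j else X j with hY
  have hY0 : Y 0 = X := by funext j; simp [hY]
  have hYend : Y (n+2) = X' := by
    funext j; simp [hY, j.isLt]
  have hYnn : ∀ m j i, 0 ≤ Y m j i := by
    intro m j i; simp only [hY]; split
    · exact hnn j i
    · exact hXnn j i
  have hYsum : ∀ m j, ∑ i, Y m j i ≤ L := by
    intro m j; simp only [hY]; split
    · exact le_trans (Finset.sum_le_sum fun i _ => hle j i) (hXsum j)
    · exact hXsum j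
  -- telescoping
  have htel : mdet X - mdet X' = ∑ m ∈ Finset.range (n+2),
      ((MM (Y m)).det - (MM (Y (m+1))).det) := by
    rw [Finset.sum_range_sub' (fun m => (MM (Y m)).det) (n+2)]
    rw [mdet_eq X, mdet_eq X', hY0, hYend]
  -- each step
  have hstep : ∀ m, m < n + 2 →
      |(MM (Y m)).det - (MM (Y (m+1))).det| ≤ (n+1) * (α * L ^ n) := by
    intro m hm
    set jm : Fin (n+2) := ⟨m, hm⟩ with hjm
    have hjmv : (jm : ℕ) = m := rfl
    set B := MM (Y (m+1)) with hB
    set v : Fin (n+2) → ℝ :=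
      fun i => if h : (i : ℕ) < n + 1 then X jm ⟨i, h⟩ - X' jm ⟨i, h⟩ else 0 with hv
    set w : Fin (n+2) → ℝ :=
      fun i => if h : (i : ℕ) < n + 1 then X' jm ⟨i, h⟩ else 1 with hw
    have hwB : w = fun i => B i jm := by
      funext i
      simp only [hw, hB, MM, Matrix.of_apply, hY]
      split
      · rw [if_pos (by rw [hjmv]; omega : (jm : ℕ) < m + 1)]
      · rfl
    have hMM : MM (Y m) = B.updateCol jm (v + w) := by
      ext i j
      rw [Matrix.updateCol_apply]
      by_cases hj : j = jm
      · subst hj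
        simp only [MM, Matrix.of_apply, if_pos rfl, Pi.add_apply, hv, hw, hY]
        split
        · rw [if_neg (by rw [hjmv]; omega : ¬ (jm : ℕ) < m)]; simp
        · norm_num
      · rw [if_neg hj]
        simp only [MM, Matrix.of_apply, hB, hY]
        split
        · have hne : (j : ℕ) ≠ m := fun hc => hj (Fin.ext (by rw [hc, hjmv]))
          have hiff : ((j : ℕ) < m) ↔ ((j : ℕ) < m + 1) := by omega
          simp only [hiff]
        · rfl
    have hBv : (MM (Y m)).det - B.det = (B.updateCol jm v).det := by
      rw [hMM, Matrix.det_updateCol_add]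
      have : B.updateCol jm w = B := by rw [hwB]; exact Matrix.updateCol_eq_self B jm
      rw [this]; ring
    rw [hBv]
    obtain ⟨hB1, hBnn, hBsum⟩ := MM_props (Y (m+1)) (hYnn (m+1)) (hYsum (m+1))
    refine colStep hL hα B jm v hB1 hBnn hBsum (fun i => ?_) ?_
    · simp only [hv]
      split
      · next h =>
          rw [abs_of_nonneg (by linarith [hle jm ⟨i, h⟩])]
          exact hα' jm ⟨i, h⟩
      · simpa using hα.le
    · simp only [hv]
      rw [dif_neg (by simp)]
  -- combine
  have hsum : |mdet X - mdet X'| ≤ (n+2) * ((n+1) * (α * L ^ n)) := by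
    rw [htel]
    refine (Finset.abs_sum_le_sum_abs _ _).trans ?_
    refine (Finset.sum_le_sum fun m hm => hstep m (Finset.mem_range.mp hm)).trans_eq ?_
    rw [Finset.sum_const, Finset.card_range, nsmul_eq_mul]
    push_cast
    ring
  refine hsum.trans ?_
  have hfin : (n + 2 - 2 : ℕ) = n := by omega
  rw [hfin]
  have hLn : (0:ℝ) ≤ L ^ n := by positivity
  push_cast
  have hx : (0:ℝ) ≤ α * L ^ n := mul_nonneg hα.le hLn
  nlinarith [mul_nonneg hx (by positivity : (0:ℝ) ≤ (n:ℝ)+2)]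
end

section
/- Let d ≥ 2, let B = (b_1, …, b_d) be a sequence of d points of ℝ^{d−1}, and let q_0, q_1, …, q_d be d+1 points of ℝ^{d−1}, each contained in the convex hull of {b_1, …, b_d}. Then the sum over i = 0, …, d of |[Q_{−i}]| is at most 2·|[B]|, where Q_{−i} denotes the sequence (q_0, …, q_d) with q_i omitted. (The simplices spanned by the d-element subsets of d+1 points cover the convex hull of the points at most twice.) -/
section aux
open Finset

lemma exists_weights {n : ℕ} {E : Type*} [AddCommGroup E] [Module ℝ E]
    (v : Fin n → E) {x : E} (hx : x ∈ convexHull ℝ (Set.range v)) :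
    ∃ w : Fin n → ℝ, (∀ i, 0 ≤ w i) ∧ ∑ i, w i = 1 ∧ ∑ i, w i • v i = x := by
  classical
  rw [convexHull_range_eq_exists_affineCombination] at hx
  obtain ⟨s, w, hw0, hw1, hx⟩ := hx
  refine ⟨fun i => if i ∈ s then w i else 0, fun i => ?_, ?_, ?_⟩
  · by_cases h : i ∈ s <;> simp [h, hw0 i]
  · rw [Finset.sum_ite_mem, Finset.univ_inter, hw1]
  · rw [← hx, Finset.affineCombination_eq_linear_combination s v w hw1]
    simp only [ite_smul, zero_smul]
    rw [Finset.sum_ite_mem, Finset.univ_inter]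


lemma stoch_key {d : ℕ} (lam : Fin (d + 1) → Fin d → ℝ)
    (h0 : ∀ i m, 0 ≤ lam i m) (h1 : ∀ i, ∑ m, lam i m = 1) :
    ∑ i : Fin (d + 1),
      |(Matrix.of (fun j m : Fin d => lam (i.succAbove j) m)).det| ≤ 2 := by
  classical
  set w : (Fin (d + 1) → Fin d) → ℝ := fun F => ∏ k, lam k (F k) with hwdef
  have hw0 : ∀ F, 0 ≤ w F := fun F => Finset.prod_nonneg fun k _ => h0 _ _
  set G : Fin (d + 1) × Equiv.Perm (Fin d) × Fin d → (Fin (d + 1) → Fin d) :=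
    fun t => t.1.insertNth t.2.2 ⇑t.2.1 with hGdef
  -- Step 1 : |det| ≤ permanent-type sum
  have step1 : ∀ i : Fin (d + 1),
      |(Matrix.of (fun j m : Fin d => lam (i.succAbove j) m)).det|
        ≤ ∑ σ : Equiv.Perm (Fin d), ∏ j, lam (i.succAbove j) (σ j) := by
    intro i
    have hre : ∑ σ : Equiv.Perm (Fin d), ∏ j, lam (i.succAbove j) (σ j)
        = ∑ σ : Equiv.Perm (Fin d), ∏ j, lam (i.succAbove (σ j)) j := by
      apply Fintype.sum_equiv (Equiv.inv (Equiv.Perm (Fin d)))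
      intro σ
      calc ∏ j, lam (i.succAbove j) (σ j)
          = ∏ j, lam (i.succAbove (σ⁻¹ (σ j))) (σ j) := by simp
        _ = ∏ j, lam (i.succAbove (σ⁻¹ j)) j :=
            Equiv.prod_comp σ (fun j => lam (i.succAbove (σ⁻¹ j)) j)
        _ = _ := rfl
    rw [hre, Matrix.det_apply]
    refine (Finset.abs_sum_le_sum_abs _ _).trans (Finset.sum_le_sum fun σ _ => ?_)
    have hp : (0:ℝ) ≤ ∏ j, lam (i.succAbove (σ j)) j :=
      Finset.prod_nonneg fun j _ => h0 _ _
    rcases Int.units_eq_one_or (Equiv.Perm.sign σ) with h | h <;>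
      simp [h, Matrix.of_apply, abs_of_nonneg hp]
  -- Step 2 : product identity
  have step2 : ∀ (i : Fin (d + 1)) (σ : Equiv.Perm (Fin d)) (m : Fin d),
      lam i m * ∏ j, lam (i.succAbove j) (σ j) = w (i.insertNth m ⇑σ) := by
    intro i σ m
    simp only [hwdef]
    rw [Fin.prod_univ_succAbove _ i]
    simp
  -- sum of all weights is 1
  have hwsum : ∑ F : Fin (d + 1) → Fin d, w F = 1 := by
    rw [hwdef]
    rw [← Fintype.piFinset_univ, Finset.sum_prod_piFinset]
    simp [h1]
  -- fiber cardinality bound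
  have hcard : ∀ F : Fin (d + 1) → Fin d,
      ((Finset.univ.filter (fun t => G t = F)).card : ℝ) ≤ 2 := by
    intro F
    obtain ⟨a, b, hab, hFab⟩ :=
      Fintype.exists_ne_map_eq_of_card_lt F (by simp)
    have hle : (Finset.univ.filter (fun t => G t = F)).card
        ≤ ({a, b} : Finset (Fin (d + 1))).card := by
      apply Finset.card_le_card_of_injOn (fun t => t.1)
      · intro t ht
        have htF : G t = F := (Finset.mem_filter.1 ht).2
        by_contra hmem
        simp only [Finset.mem_coe, Finset.mem_insert, Finset.mem_singleton, not_or] at hmem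
        obtain ⟨ha, hb⟩ := hmem
        obtain ⟨ja, hja⟩ := Fin.exists_succAbove_eq (Ne.symm ha)
        obtain ⟨jb, hjb⟩ := Fin.exists_succAbove_eq (Ne.symm hb)
        have e1 : F a = t.2.1 ja := by
          rw [← hja, ← htF, hGdef]; simp
        have e2 : F b = t.2.1 jb := by
          rw [← hjb, ← htF, hGdef]; simp
        have : ja = jb := t.2.1.injective (by rw [← e1, ← e2, hFab])
        exact hab (by rw [← hja, ← hjb, this])
      · intro t ht t' ht' h1st'
        have h1st : t.1 = t'.1 := h1st'
        simp only [Finset.coe_filter, Set.mem_setOf_eq, Finset.mem_univ, true_and] at ht ht'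
        have hσ : t.2.1 = t'.2.1 := by
          apply Equiv.ext
          intro j
          have k1 : t.2.1 j = F (t.1.succAbove j) := by rw [← ht, hGdef]; simp
          have k2 : t'.2.1 j = F (t'.1.succAbove j) := by rw [← ht', hGdef]; simp
          rw [k1, k2, h1st]
        have hm : t.2.2 = t'.2.2 := by
          have k1 : t.2.2 = F t.1 := by rw [← ht, hGdef]; simp
          have k2 : t'.2.2 = F t'.1 := by rw [← ht', hGdef]; simp
          rw [k1, k2, h1st]
        exact Prod.ext h1st (Prod.ext hσ hm)
    have h2 : ({a, b} : Finset (Fin (d + 1))).card ≤ 2 :=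
      (Finset.card_insert_le a {b}).trans (by simp)
    exact_mod_cast hle.trans h2
  -- main chain
  calc ∑ i : Fin (d + 1), |(Matrix.of (fun j m : Fin d => lam (i.succAbove j) m)).det|
      ≤ ∑ i : Fin (d + 1), ∑ σ : Equiv.Perm (Fin d), ∏ j, lam (i.succAbove j) (σ j) :=
        Finset.sum_le_sum fun i _ => step1 i
    _ = ∑ t : Fin (d + 1) × Equiv.Perm (Fin d) × Fin d, w (G t) := by
        rw [Fintype.sum_prod_type]
        refine Finset.sum_congr rfl fun i _ => ?_
        rw [Fintype.sum_prod_type]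
        refine Finset.sum_congr rfl fun σ _ => ?_
        calc ∏ j, lam (i.succAbove j) (σ j)
            = (∑ m, lam i m) * ∏ j, lam (i.succAbove j) (σ j) := by rw [h1 i, one_mul]
          _ = ∑ m, lam i m * ∏ j, lam (i.succAbove j) (σ j) := Finset.sum_mul _ _ _
          _ = ∑ m, w (G (i, σ, m)) :=
              Finset.sum_congr rfl fun m _ => step2 i σ m
    _ = ∑ F : Fin (d + 1) → Fin d,
          ∑ t ∈ Finset.univ.filter (fun t => G t = F), w F :=
        (Finset.sum_fiberwise_of_maps_to' (fun t _ => Finset.mem_univ (G t)) w).symm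
    _ ≤ ∑ F : Fin (d + 1) → Fin d, 2 * w F := by
        refine Finset.sum_le_sum fun F _ => ?_
        rw [Finset.sum_const, nsmul_eq_mul]
        exact mul_le_mul_of_nonneg_right (hcard F) (hw0 F)
    _ = 2 := by rw [← Finset.mul_sum, hwsum, mul_one]

end aux

/-- for `d+1` points `q_0, …, q_d` of ℝ^{d-1} contained in the convex hull
of `d` points `B`, the sum of the absolute determinants of the `d`-element subsequences of
`(q_0, …, q_d)` is at most `2·|[B]|`. -/

theorem stmt11 (d : ℕ) (hd : 2 ≤ d)
    (B : Fin d → (Fin (d - 1) → ℝ)) (q : Fin (d + 1) → (Fin (d - 1) → ℝ))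
    (hq : ∀ i, q i ∈ convexHull ℝ (Set.range B)) :
    ∑ i : Fin (d + 1), |mdet (fun j : Fin d => q (i.succAbove j))| ≤ 2 * |mdet B| := by
  classical
  choose lam hlam0 hlam1 hlamrep using fun k => exists_weights B (hq k)
  have key := stoch_key lam hlam0 hlam1
  set matB : Matrix (Fin d) (Fin d) ℝ :=
    Matrix.of (fun i j : Fin d => if h : (i : ℕ) < d - 1 then B j ⟨i, h⟩ else 1) with hmatB
  have hmdetB : mdet B = matB.det := rfl
  have hfac : ∀ i : Fin (d + 1),
      mdet (fun j : Fin d => q (i.succAbove j))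
        = matB.det * (Matrix.of (fun j m : Fin d => lam (i.succAbove j) m)).det := by
    intro i
    have hmat : (Matrix.of (fun r j : Fin d =>
        if h : (r : ℕ) < d - 1 then q (i.succAbove j) ⟨r, h⟩ else 1))
        = matB * (Matrix.of (fun j m : Fin d => lam (i.succAbove j) m)).transpose := by
      ext r j
      rw [Matrix.mul_apply]
      simp only [Matrix.of_apply, Matrix.transpose_apply, hmatB]
      by_cases h : (r : ℕ) < d - 1
      · simp only [h, dif_pos]
        rw [← hlamrep (i.succAbove j), Finset.sum_apply]
        exact Finset.sum_congr rfl fun m _ => by simp [mul_comm]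
      · simp only [h, dif_neg, not_false_iff, one_mul]
        exact (hlam1 (i.succAbove j)).symm
    have hQ : mdet (fun j : Fin d => q (i.succAbove j))
        = (matB * (Matrix.of (fun j m : Fin d => lam (i.succAbove j) m)).transpose).det := by
      rw [mdet]
      exact congrArg Matrix.det hmat
    rw [hQ, Matrix.det_mul, Matrix.det_transpose]
  calc ∑ i : Fin (d + 1), |mdet (fun j : Fin d => q (i.succAbove j))|
      = ∑ i : Fin (d + 1),
          |matB.det| * |(Matrix.of (fun j m : Fin d => lam (i.succAbove j) m)).det| := by
        exact Finset.sum_congr rfl fun i _ => by rw [hfac i, abs_mul]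
    _ = |matB.det| * ∑ i : Fin (d + 1),
          |(Matrix.of (fun j m : Fin d => lam (i.succAbove j) m)).det| :=
        (Finset.mul_sum _ _ _).symm
    _ ≤ |matB.det| * 2 := mul_le_mul_of_nonneg_left key (abs_nonneg _)
    _ = 2 * |mdet B| := by rw [hmdetB]; ring
end

section
/- Fix d ≥ 2 and an abstract stacking structure on n vertices in which the base facet B := {1, …, d} is never stacked on (σ_i ≠ B for all i). Let q : {1, …, n} → ℝ^d be a lifting of a flat embedding of this structure, and suppose that every point q(i) has nonnegative z-coordinate, that the stress ω_X is negative for every ridge X incident to the base facet B, and that ω_X is positive for every other ridge X. Then q realizes a convex polytope: for every facet F ∈ F_n, all points q(1), …, q(n) lie in the closed halfspace below the affine hyperplane spanned by q(F), and all points lie in the closed halfspace z ≥ 0 above the hyperplane spanned by q(B); hence the convex hull of q(1), …, q(n) is a convex d-polytope whose facets are spanned by q(F) for F ∈ F_n ∪ {B}. -/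
/-- `facetsAux d σ m` is the family `F_{d+1+m}` of facets of the abstract stacking
structure with stacking choices `σ`: `F_{d+1}` consists of all `d`-element subsets of
`{1, …, d+1}`, and `F_i` is obtained from `F_{i-1}` by removing the stacked-on facet
`σ_i` and adding the `d` facets `(σ_i ∖ {x}) ∪ {i}`, `x ∈ σ_i`. -/
def facetsAux (d : ℕ) (σ : ℕ → Finset ℕ) : ℕ → Finset (Finset ℕ)
  | 0 => (Finset.Icc 1 (d + 1)).powersetCard d
  | m + 1 =>
    let i := d + 2 + m
    ((facetsAux d σ m).erase (σ i)) ∪ (σ i).image (fun x => insert i ((σ i).erase x))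

/-- `facets d σ j` is the facet family `F_j` (for `j ≥ d+1`). -/
def facets (d : ℕ) (σ : ℕ → Finset ℕ) (j : ℕ) : Finset (Finset ℕ) :=
  facetsAux d σ (j - (d + 1))


open Finset

namespace Stk

/-! ### determinant toolkit -/

variable {k : ℕ}

lemma snoc'_lt {α : Type*} (X : Fin (k-1) → α) (s : α) (j : Fin (k-1)) :
    snoc' X s (Fin.castLE (by omega) j) = X j := by
  unfold snoc'
  have h : ((Fin.castLE (by omega : k - 1 ≤ k) j : Fin k) : ℕ) < k - 1 := j.2
  rw [dif_pos h]
  exact congrArg X (Fin.ext rfl)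

lemma snoc'_last {α : Type*} (hk : 0 < k) (X : Fin (k-1) → α) (s : α) :
    snoc' X s ⟨k-1, by omega⟩ = s := by
  unfold snoc'
  rw [dif_neg (by simp)]

lemma projZ_snoc' {d : ℕ} (X : Fin (d-1) → (Fin d → ℝ)) (s : Fin d → ℝ) :
    (fun i => projZ (snoc' X s i)) = snoc' (fun j => projZ (X j)) (projZ s) := by
  funext i
  unfold snoc'
  by_cases h : (i : ℕ) < d - 1
  · rw [dif_pos h, dif_pos h]
  · rw [dif_neg h, dif_neg h]

lemma pdet_eq {d : ℕ} (X : Fin (d-1) → (Fin d → ℝ)) (s : Fin d → ℝ) :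
    pdet (snoc' X s) = mdet (snoc' (fun j => projZ (X j)) (projZ s)) := by
  unfold pdet
  rw [projZ_snoc']

/-- the matrix of `mdet` -/
lemma mdet_def (S : Fin k → (Fin (k - 1) → ℝ)) : mdet S =
    Matrix.det (Matrix.of (fun i j : Fin k =>
      if h : (i : ℕ) < k - 1 then S j ⟨i, h⟩ else 1)) := rfl

lemma mulVec_eq_zero_iff (hk : 0 < k) (S : Fin k → (Fin (k - 1) → ℝ)) (v : Fin k → ℝ) :
    (Matrix.of (fun i j : Fin k =>
      if h : (i : ℕ) < k - 1 then S j ⟨i, h⟩ else 1)).mulVec v = 0 ↔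
    (∑ j, v j = 0 ∧ ∑ j, v j • S j = 0) := by
  have hrow : ∀ i : Fin k, (Matrix.of (fun i j : Fin k =>
      if h : (i : ℕ) < k - 1 then S j ⟨i, h⟩ else 1)).mulVec v i =
      if h : (i : ℕ) < k - 1 then ∑ j, v j * S j ⟨i, h⟩ else ∑ j, v j := by
    intro i
    simp only [Matrix.mulVec, dotProduct, Matrix.of_apply]
    by_cases h : (i : ℕ) < k - 1
    · rw [dif_pos h]
      apply Finset.sum_congr rfl
      intro j _
      rw [dif_pos h, mul_comm]
    · rw [dif_neg h]
      apply Finset.sum_congr rfl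
      intro j _
      rw [dif_neg h, one_mul]
  constructor
  · intro h
    have h' : ∀ i : Fin k, (if h : (i : ℕ) < k - 1 then ∑ j, v j * S j ⟨i, h⟩ else ∑ j, v j) = 0 := by
      intro i; rw [← hrow]; exact congrFun h i
    have hsum : ∑ j, v j = 0 := by
      have := h' ⟨k-1, by omega⟩
      rwa [dif_neg (by simp)] at this
    refine ⟨hsum, ?_⟩
    funext c
    have := h' (Fin.castLE (by omega) c)
    simp only [Fin.coe_castLE, Fin.eta] at this
    rw [dif_pos c.2] at this
    simp only [Finset.sum_apply, Pi.smul_apply, smul_eq_mul, Pi.zero_apply]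
    simpa using this
  · rintro ⟨h1, h2⟩
    funext i
    rw [hrow i]
    by_cases h : (i : ℕ) < k - 1
    · rw [dif_pos h]
      have := congrFun h2 ⟨i, h⟩
      simpa using this
    · rw [dif_neg h]; exact h1

lemma weights_eq_zero_iff_affdep (S : Fin k → (Fin (k - 1) → ℝ)) :
    (∃ v : Fin k → ℝ, v ≠ 0 ∧ ∑ j, v j = 0 ∧ ∑ j, v j • S j = 0) ↔ ¬ AffineIndependent ℝ S := by
  rw [affineIndependent_iff_of_fintype]
  push_neg
  constructor
  · rintro ⟨v, hv, h1, h2⟩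
    refine ⟨v, h1, ?_, ?_⟩
    · rw [Finset.weightedVSub_eq_linear_combination _ h1]
      exact h2
    · by_contra hc
      push_neg at hc
      exact hv (funext hc)
  · rintro ⟨w, h1, h2, i, hi⟩
    refine ⟨w, ?_, h1, ?_⟩
    · intro hw; exact hi (by rw [hw]; rfl)
    · rw [← Finset.weightedVSub_eq_linear_combination _ h1]
      exact h2

lemma mdet_eq_zero_iff (hk : 0 < k) (S : Fin k → (Fin (k - 1) → ℝ)) :
    mdet S = 0 ↔ ¬ AffineIndependent ℝ S := by
  rw [mdet_def, ← Matrix.exists_mulVec_eq_zero_iff, ← weights_eq_zero_iff_affdep]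
  constructor
  · rintro ⟨v, hv, h⟩
    exact ⟨v, hv, (mulVec_eq_zero_iff hk S v).1 h⟩
  · rintro ⟨v, hv, h1, h2⟩
    exact ⟨v, hv, (mulVec_eq_zero_iff hk S v).2 ⟨h1, h2⟩⟩

lemma mdet_ne_zero (hk : 0 < k) {S : Fin k → (Fin (k - 1) → ℝ)}
    (h : AffineIndependent ℝ S) : mdet S ≠ 0 := by
  intro h0
  exact (mdet_eq_zero_iff hk S).1 h0 h

lemma mdet_eq_zero_of_eq (hk : 0 < k) (S : Fin k → (Fin (k - 1) → ℝ)) {i j : Fin k}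
    (hij : i ≠ j) (hS : S i = S j) : mdet S = 0 := by
  apply (mdet_eq_zero_iff hk S).2
  intro hAI
  exact hij (hAI.injective (by rw [hS]))

end Stk
namespace Stk

variable {k : ℕ}

/-- row of a point, with appended 1 -/
def rowPt (y : Fin (k-1) → ℝ) : Fin k → ℝ := fun i => if h : (i:ℕ) < k - 1 then y ⟨i, h⟩ else 1
/-- row of a point, with appended 0 -/
def rowPt0 (y : Fin (k-1) → ℝ) : Fin k → ℝ := fun i => if h : (i:ℕ) < k - 1 then y ⟨i, h⟩ else 0

lemma rowPt_decomp (y : Fin (k-1) → ℝ) : rowPt y = rowPt0 y + rowPt 0 := by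
  funext i; unfold rowPt rowPt0
  by_cases h : (i:ℕ) < k - 1
  · simp [h]
  · simp [h]

lemma rowPt0_add (y z : Fin (k-1) → ℝ) : rowPt0 (y + z) = rowPt0 y + rowPt0 z := by
  funext i; unfold rowPt0
  by_cases h : (i:ℕ) < k - 1 <;> simp [h]

lemma rowPt0_smul (c : ℝ) (y : Fin (k-1) → ℝ) : rowPt0 (c • y) = c • rowPt0 y := by
  funext i; unfold rowPt0
  by_cases h : (i:ℕ) < k - 1 <;> simp [h]

variable (hk : 0 < k)

/-- base matrix for the wall `Y` -/
noncomputable def wallMat (Y : Fin (k-1) → (Fin (k-1) → ℝ)) : Matrix (Fin k) (Fin k) ℝ :=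
  Matrix.of fun j i => if h : (j:ℕ) < k - 1 then rowPt (Y ⟨j, h⟩) i else 0

/-- `mdet (snoc' Y p)` as a determinant with update of the last row -/
lemma mdet_snoc_eq (Y : Fin (k-1) → (Fin (k-1) → ℝ)) (p : Fin (k-1) → ℝ) :
    mdet (snoc' Y p) = ((wallMat Y).updateRow ⟨k-1, by omega⟩ (rowPt p)).det := by
  rw [mdet_def, ← Matrix.det_transpose]
  congr 1
  ext j i
  simp only [Matrix.transpose_apply, Matrix.of_apply, Matrix.updateRow_apply, wallMat]
  by_cases hj : (j:ℕ) < k - 1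
  · have hne : j ≠ ⟨k-1, by omega⟩ := by
      intro h; rw [h] at hj; simp at hj
    rw [if_neg hne, dif_pos hj]
    unfold snoc' rowPt
    by_cases hi : (i:ℕ) < k - 1
    · rw [dif_pos hi, dif_pos hi, dif_pos hj]
    · rw [dif_neg hi, dif_neg hi]
  · have he : j = ⟨k-1, by omega⟩ := by
      apply Fin.ext; simp only []; omega
    rw [if_pos he]
    unfold snoc' rowPt
    by_cases hi : (i:ℕ) < k - 1
    · rw [dif_pos hi, dif_pos hi, dif_neg hj]
    · rw [dif_neg hi, dif_neg hi]

/-- linear part of the wall determinant function -/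
noncomputable def wallDetLin (Y : Fin (k-1) → (Fin (k-1) → ℝ)) :
    (Fin (k-1) → ℝ) →ₗ[ℝ] ℝ where
  toFun := fun y => ((wallMat Y).updateRow ⟨k-1, by omega⟩ (rowPt0 y)).det
  map_add' := by
    intro y z
    show ((wallMat Y).updateRow ⟨k-1, by omega⟩ (rowPt0 (y + z))).det = _
    rw [rowPt0_add, Matrix.det_updateRow_add]
  map_smul' := by
    intro c y
    show ((wallMat Y).updateRow ⟨k-1, by omega⟩ (rowPt0 (c • y))).det = _
    rw [rowPt0_smul, Matrix.det_updateRow_smul]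
    rfl

/-- the affine map `p ↦ mdet (snoc' Y p)`. -/
noncomputable def wallDet (Y : Fin (k-1) → (Fin (k-1) → ℝ)) :
    (Fin (k-1) → ℝ) →ᵃ[ℝ] ℝ where
  toFun := fun p => mdet (snoc' Y p)
  linear := wallDetLin hk Y
  map_vadd' := by
    intro p v
    show mdet (snoc' Y (v + p)) = wallDetLin hk Y v +ᵥ mdet (snoc' Y p)
    rw [mdet_snoc_eq hk, mdet_snoc_eq hk]
    have : rowPt (v + p) = rowPt0 v + rowPt p := by
      rw [rowPt_decomp (v + p), rowPt0_add, rowPt_decomp p, add_assoc]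
    rw [this, Matrix.det_updateRow_add]
    rfl

@[simp] lemma wallDet_apply (Y : Fin (k-1) → (Fin (k-1) → ℝ)) (p : Fin (k-1) → ℝ) :
    wallDet hk Y p = mdet (snoc' Y p) := rfl

/-- the wall determinant vanishes on the wall points -/
lemma wallDet_vanish (Y : Fin (k-1) → (Fin (k-1) → ℝ)) (j : Fin (k-1)) :
    wallDet hk Y (Y j) = 0 := by
  rw [wallDet_apply]
  apply mdet_eq_zero_of_eq hk (snoc' Y (Y j))
    (i := Fin.castLE (by omega) j) (j := ⟨k-1, by omega⟩)
  · intro h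
    have := congrArg Fin.val h
    simp only [Fin.coe_castLE] at this
    omega
  · rw [snoc'_lt, snoc'_last hk]

end Stk
namespace Stk

variable {m : ℕ} {ι : Type*} [Fintype ι]

lemma apply_eq_sum_coords (b : AffineBasis ι ℝ (Fin m → ℝ)) (f : (Fin m → ℝ) →ᵃ[ℝ] ℝ)
    (p : Fin m → ℝ) : f p = ∑ i, b.coord i p * f (b i) := by
  conv_lhs => rw [← b.affineCombination_coord_eq_self p]
  rw [Finset.map_affineCombination _ _ _ (b.sum_coord_apply_eq_one p) f]
  rw [Finset.univ.affineCombination_eq_linear_combination _ _ (b.sum_coord_apply_eq_one p)]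
  simp [smul_eq_mul]

lemma affine_eq_on_basis (b : AffineBasis ι ℝ (Fin m → ℝ)) {f g : (Fin m → ℝ) →ᵃ[ℝ] ℝ}
    (h : ∀ i, f (b i) = g (b i)) (p : Fin m → ℝ) : f p = g p := by
  rw [apply_eq_sum_coords b f p, apply_eq_sum_coords b g p]
  exact Finset.sum_congr rfl fun i _ => by rw [h i]

lemma sum_smul_affine_eq_zero (pts : ι → (Fin m → ℝ)) (w : ι → ℝ)
    (h0 : ∑ i, w i = 0) (hpt : ∑ i, w i • pts i = 0) (f : (Fin m → ℝ) →ᵃ[ℝ] ℝ) :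
    ∑ i, w i * f (pts i) = 0 := by
  have hdec : ∀ i, f (pts i) = f.linear (pts i) + f 0 := by
    intro i
    have h := f.map_vadd (0 : Fin m → ℝ) (pts i)
    rw [vadd_eq_add, add_zero, vadd_eq_add] at h
    exact h
  calc ∑ i, w i * f (pts i) = ∑ i, (w i * f.linear (pts i) + w i * f 0) := by
        apply Finset.sum_congr rfl; intro i _; rw [hdec i]; ring
    _ = ∑ i, f.linear (w i • pts i) + (∑ i, w i) * f 0 := by
        rw [Finset.sum_add_distrib, ← Finset.sum_mul]
        congr 1
        apply Finset.sum_congr rfl; intro i _; rw [map_smul]; rfl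
    _ = 0 := by rw [← map_sum, hpt, map_zero, h0, zero_mul, add_zero]

lemma convexHull_le_halfspace {s : Set (Fin m → ℝ)} {f : (Fin m → ℝ) →ᵃ[ℝ] ℝ} {c : ℝ}
    (h : ∀ x ∈ s, f x ≤ c) : ∀ p ∈ convexHull ℝ s, f p ≤ c := by
  intro p hp
  have : convexHull ℝ s ⊆ f ⁻¹' (Set.Iic c) := convexHull_min h ((convex_Iic c).affine_preimage f)
  exact this hp

lemma convexHull_ge_halfspace {s : Set (Fin m → ℝ)} {f : (Fin m → ℝ) →ᵃ[ℝ] ℝ} {c : ℝ}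
    (h : ∀ x ∈ s, c ≤ f x) : ∀ p ∈ convexHull ℝ s, c ≤ f p := by
  intro p hp
  have : convexHull ℝ s ⊆ f ⁻¹' (Set.Ici c) := convexHull_min h ((convex_Ici c).affine_preimage f)
  exact this hp

lemma interior_coord_pos (b : AffineBasis ι ℝ (Fin m → ℝ))
    {S : Set (Fin m → ℝ)} (hS : ∀ x ∈ S, ∀ i, 0 ≤ b.coord i x)
    {p : Fin m → ℝ} (hp : p ∈ interior S) (i : ι) : 0 < b.coord i p := by
  classical
  have hone : b.coord i (b i) = 1 := by rw [b.coord_apply]; simp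
  rcases lt_or_eq_of_le (hS p (interior_subset hp) i) with h | h
  · exact h
  · exfalso
    -- coord i p = 0; move away from b i to get a point of S with negative coordinate
    rcases Metric.mem_nhds_iff.1 (mem_interior_iff_mem_nhds.1 hp) with ⟨ε, hε, hball⟩
    have hpbi : p ≠ b i := by
      intro he
      rw [he, hone] at h
      simp at h
    have hnorm : 0 < ‖p - b i‖ := by
      rw [norm_pos_iff, sub_ne_zero]
      exact hpbi
    set t : ℝ := ε / (2 * ‖p - b i‖) with ht
    have htpos : 0 < t := by positivity
    set pt : Fin m → ℝ := AffineMap.lineMap (b i) p (1 + t) with hptdef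
    have hptS : pt ∈ S := by
      apply hball
      have : pt - p = t • (p - b i) := by
        rw [hptdef, AffineMap.lineMap_apply]
        simp only [vsub_eq_sub, vadd_eq_add]
        module
      rw [Metric.mem_ball, dist_eq_norm, this, norm_smul]
      rw [Real.norm_eq_abs, abs_of_pos htpos, ht]
      rw [div_mul_eq_mul_div, mul_comm]
      rw [div_lt_iff₀ (by positivity)]
      nlinarith [hnorm, hε]
    have hc : b.coord i pt = -t := by
      rw [hptdef, AffineMap.apply_lineMap, hone, ← h]
      simp only [AffineMap.lineMap_apply, vsub_eq_sub, vadd_eq_add, smul_eq_mul]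
      ring
    have := hS pt hptS i
    rw [hc] at this
    linarith

end Stk
namespace Stk

set_option linter.unusedSectionVars false

variable {d : ℕ} (q : ℕ → (Fin d → ℝ))

/-- projected point -/
noncomputable def pq (v : ℕ) : Fin (d-1) → ℝ := projZ (q v)

/-- projected cell of a finite vertex set -/
noncomputable def cellq (F : Finset ℕ) : Set (Fin (d-1) → ℝ) :=
  convexHull ℝ ((fun v => projZ (q v)) '' ↑F)

/-- the family of projected points of `F`, indexed by `↑F` -/
noncomputable def famq (F : Finset ℕ) : ↑F → (Fin (d-1) → ℝ) := fun v => projZ (q ↑v)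

/-- a "wall map" of the facet `F` opposite to vertex `u`: the affine map which is `0`
on the other vertices of `F` and `1` at `u`. -/
def IsWallMap (F : Finset ℕ) (u : ℕ) (ψ : (Fin (d-1) → ℝ) →ᵃ[ℝ] ℝ) : Prop :=
  (∀ w ∈ F, w ≠ u → ψ (projZ (q w)) = 0) ∧ ψ (projZ (q u)) = 1

/-- a facet: the data needed to get an affine basis -/
def IsFacetLike (F : Finset ℕ) (hd : 2 ≤ d) : Prop :=
  F.card = d ∧ AffineIndependent ℝ (famq q F)

lemma span_top_of_facetLike (hd : 2 ≤ d) {F : Finset ℕ} (h : IsFacetLike q F hd) :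
    affineSpan ℝ (Set.range (famq q F)) = ⊤ := by
  rw [h.2.affineSpan_eq_top_iff_card_eq_finrank_add_one]
  rw [Fintype.card_coe, h.1]
  have : Module.finrank ℝ (Fin (d-1) → ℝ) = d - 1 := by
    rw [Module.finrank_pi]
    simp
  rw [this]
  omega

/-- the affine basis of a facet -/
noncomputable def fbasis (hd : 2 ≤ d) (F : Finset ℕ) (h : IsFacetLike q F hd) :
    AffineBasis ↑F ℝ (Fin (d-1) → ℝ) :=
  ⟨famq q F, h.2, span_top_of_facetLike q hd h⟩

lemma fbasis_apply (hd : 2 ≤ d) (F : Finset ℕ) (h : IsFacetLike q F hd) (v : ↑F) :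
    fbasis q hd F h v = projZ (q ↑v) := rfl

lemma fbasis_coord_self (hd : 2 ≤ d) (F : Finset ℕ) (h : IsFacetLike q F hd) (v : ↑F) :
    (fbasis q hd F h).coord v (projZ (q ↑v)) = 1 := by
  classical
  have := (fbasis q hd F h).coord_apply v v
  rw [if_pos rfl] at this
  exact this

lemma fbasis_coord_ne (hd : 2 ≤ d) (F : Finset ℕ) (h : IsFacetLike q F hd) (v w : ↑F)
    (hvw : v ≠ w) : (fbasis q hd F h).coord v (projZ (q ↑w)) = 0 := by
  classical
  have := (fbasis q hd F h).coord_apply v w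
  rw [if_neg hvw] at this
  exact this

/-- the coordinate maps of a facet are wall maps -/
lemma coord_isWallMap (hd : 2 ≤ d) (F : Finset ℕ) (h : IsFacetLike q F hd) (u : ℕ) (hu : u ∈ F) :
    IsWallMap q F u ((fbasis q hd F h).coord ⟨u, hu⟩) := by
  constructor
  · intro w hw hwu
    exact fbasis_coord_ne q hd F h ⟨u, hu⟩ ⟨w, hw⟩ (fun he => hwu (by
      simpa using congrArg Subtype.val he.symm))
  · exact fbasis_coord_self q hd F h ⟨u, hu⟩

/-- wall maps of a facet are unique -/
lemma wallMap_unique (hd : 2 ≤ d) {F : Finset ℕ} (h : IsFacetLike q F hd) {u : ℕ}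
    {ψ₁ ψ₂ : (Fin (d-1) → ℝ) →ᵃ[ℝ] ℝ} (h₁ : IsWallMap q F u ψ₁) (h₂ : IsWallMap q F u ψ₂)
    (hu : u ∈ F) (p : Fin (d-1) → ℝ) : ψ₁ p = ψ₂ p := by
  apply affine_eq_on_basis (fbasis q hd F h)
  rintro ⟨w, hw⟩
  rw [fbasis_apply]
  by_cases hwu : w = u
  · subst hwu
    rw [h₁.2, h₂.2]
  · rw [h₁.1 w hw hwu, h₂.1 w hw hwu]

/-- any wall map is the corresponding basis coordinate -/
lemma wallMap_eq_coord (hd : 2 ≤ d) {F : Finset ℕ} (h : IsFacetLike q F hd) {u : ℕ}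
    {ψ : (Fin (d-1) → ℝ) →ᵃ[ℝ] ℝ} (hψ : IsWallMap q F u ψ) (hu : u ∈ F)
    (p : Fin (d-1) → ℝ) : ψ p = (fbasis q hd F h).coord ⟨u, hu⟩ p :=
  wallMap_unique q hd h hψ (coord_isWallMap q hd F h u hu) hu p

lemma coords_nonneg_of_mem_cell (hd : 2 ≤ d) {F : Finset ℕ} (h : IsFacetLike q F hd)
    {p : Fin (d-1) → ℝ} (hp : p ∈ cellq q F) (u : ↑F) :
    0 ≤ (fbasis q hd F h).coord u p := by
  apply convexHull_ge_halfspace _ p hp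
  rintro x ⟨v, hv, rfl⟩
  by_cases hvu : (⟨v, hv⟩ : ↑F) = u
  · rw [← hvu, fbasis_coord_self]
    norm_num
  · rw [fbasis_coord_ne q hd F h u ⟨v, hv⟩ (fun he => hvu he.symm)]

lemma mem_cell_of_coords_nonneg (hd : 2 ≤ d) {F : Finset ℕ} (h : IsFacetLike q F hd)
    {p : Fin (d-1) → ℝ} (hp : ∀ u : ↑F, 0 ≤ (fbasis q hd F h).coord u p) :
    p ∈ cellq q F := by
  classical
  have hrep := (fbasis q hd F h).affineCombination_coord_eq_self p
  rw [← hrep]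
  have hmem := affineCombination_mem_convexHull (s := Finset.univ)
    (v := fun u : ↑F => (fbasis q hd F h) u)
    (w := fun u : ↑F => (fbasis q hd F h).coord u p)
    (fun i _ => hp i) ((fbasis q hd F h).sum_coord_apply_eq_one p)
  have : Set.range (fun u : ↑F => (fbasis q hd F h) u) = (fun v => projZ (q v)) '' ↑F := by
    ext x
    constructor
    · rintro ⟨u, rfl⟩; exact ⟨↑u, u.2, rfl⟩
    · rintro ⟨v, hv, rfl⟩; exact ⟨⟨v, hv⟩, rfl⟩
  rw [this] at hmem
  exact hmem

/-- membership characterization: negative coordinate means not in the cell -/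
lemma exists_neg_coord_of_not_mem (hd : 2 ≤ d) {F : Finset ℕ} (h : IsFacetLike q F hd)
    {p : Fin (d-1) → ℝ} (hp : p ∉ cellq q F) :
    ∃ u : ↑F, (fbasis q hd F h).coord u p < 0 := by
  by_contra hc
  push_neg at hc
  exact hp (mem_cell_of_coords_nonneg q hd h hc)

end Stk
namespace Stk

set_option linter.unusedSectionVars false
set_option maxHeartbeats 800000

variable {d : ℕ} (q : ℕ → (Fin d → ℝ)) (hd : 2 ≤ d)
variable {τ : Finset ℕ} {i : ℕ} (hτ : IsFacetLike q τ hd) (hiτ : i ∉ τ)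
  (hint : projZ (q i) ∈ interior (cellq q τ))

include hτ

/-- barycentric coordinate of the new vertex -/
noncomputable def muc (x : ℕ) (hx : x ∈ τ) : ℝ :=
  (fbasis q hd τ hτ).coord ⟨x, hx⟩ (projZ (q i))

include hint in
lemma muc_pos (x : ℕ) (hx : x ∈ τ) : 0 < muc q hd hτ (i := i) x hx := by
  apply interior_coord_pos (fbasis q hd τ hτ) (S := cellq q τ) _ hint
  intro p hp u
  exact coords_nonneg_of_mem_cell q hd hτ hp u

include hiτ in
lemma stellar_card (x : ℕ) (hx : x ∈ τ) : (insert i (τ.erase x)).card = d := by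
  rw [Finset.card_insert_of_notMem (fun h => hiτ (Finset.mem_of_mem_erase h))]
  rw [Finset.card_erase_of_mem hx, hτ.1]
  omega

include hint in
lemma stellar_indep (x : ℕ) (hx : x ∈ τ) :
    AffineIndependent ℝ (famq q (insert i (τ.erase x))) := by
  classical
  set F := insert i (τ.erase x) with hF
  rw [affineIndependent_iff_of_fintype]
  intro w hw0 hcomb
  have hlin : ∑ u : ↑F, w u • famq q F u = 0 := by
    rw [← Finset.univ.weightedVSub_eq_linear_combination hw0]
    exact hcomb
  have key : ∀ ψ : (Fin (d-1) → ℝ) →ᵃ[ℝ] ℝ, ∑ u : ↑F, w u * ψ (projZ (q ↑u)) = 0 :=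
    fun ψ => sum_smul_affine_eq_zero (fun u : ↑F => projZ (q ↑u)) w hw0 hlin ψ
  have hiF : i ∈ F := Finset.mem_insert_self _ _
  have hvalmem : ∀ u : ↑F, (u : ℕ) = i ∨ ((u : ℕ) ∈ τ.erase x) := by
    rintro ⟨u, hu⟩
    rcases Finset.mem_insert.1 hu with h | h
    · exact Or.inl h
    · exact Or.inr h
  have hwi : w ⟨i, hiF⟩ = 0 := by
    have hx' := key ((fbasis q hd τ hτ).coord ⟨x, hx⟩)
    rw [Finset.sum_eq_single (⟨i, hiF⟩ : ↑F)] at hx'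
    · have hμ := muc_pos q hd hτ hint x hx
      unfold muc at hμ
      rcases mul_eq_zero.1 hx' with h | h
      · exact h
      · rw [h] at hμ; exact absurd hμ (lt_irrefl 0)
    · intro u _ hu
      rcases hvalmem u with h | h
      · exact absurd (Subtype.ext h) hu
      · have hune : x ≠ (u : ℕ) := fun he => (Finset.mem_erase.1 h).1 he.symm
        rw [fbasis_coord_ne q hd τ hτ ⟨x, hx⟩ ⟨↑u, Finset.mem_of_mem_erase h⟩
          (fun he => hune (congrArg Subtype.val he)), mul_zero]
    · intro h
      exact absurd (Finset.mem_univ _) h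
  intro u
  rcases hvalmem u with h | h
  · have : u = ⟨i, hiF⟩ := Subtype.ext h
    rw [this]; exact hwi
  · -- u.val ∈ τ.erase x
    have huτ : (u : ℕ) ∈ τ := Finset.mem_of_mem_erase h
    have hx' := key ((fbasis q hd τ hτ).coord ⟨↑u, huτ⟩)
    rw [Finset.sum_eq_single u] at hx'
    · rw [fbasis_coord_self q hd τ hτ ⟨↑u, huτ⟩, mul_one] at hx'
      exact hx'
    · intro v _ hv
      rcases hvalmem v with h2 | h2
      · have : v = ⟨i, hiF⟩ := Subtype.ext h2
        rw [this, hwi, zero_mul]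
      · have hvτ : (v : ℕ) ∈ τ := Finset.mem_of_mem_erase h2
        rw [fbasis_coord_ne q hd τ hτ ⟨↑u, huτ⟩ ⟨↑v, hvτ⟩
          (fun he => hv (Subtype.ext ((congrArg Subtype.val he).symm : (↑v:ℕ) = ↑u)))]
        rw [mul_zero]
    · intro hcon
      exact absurd (Finset.mem_univ _) hcon

include hiτ hint in
lemma stellar_facetLike (x : ℕ) (hx : x ∈ τ) :
    IsFacetLike q (insert i (τ.erase x)) hd :=
  ⟨stellar_card q hd hτ hiτ x hx, stellar_indep q hd hτ hint x hx⟩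

end Stk
namespace Stk

set_option linter.unusedSectionVars false
set_option maxHeartbeats 1000000

variable {d : ℕ} (q : ℕ → (Fin d → ℝ)) (hd : 2 ≤ d)
variable {τ : Finset ℕ} {i : ℕ} (hτ : IsFacetLike q τ hd) (hiτ : i ∉ τ)
  (hint : projZ (q i) ∈ interior (cellq q τ))

include hτ hiτ hint

lemma stellar_wallMap_i (x : ℕ) (hx : x ∈ τ) :
    IsWallMap q (insert i (τ.erase x)) i
      ((muc q hd hτ (i := i) x hx)⁻¹ • (fbasis q hd τ hτ).coord ⟨x, hx⟩) := by
  have hμ := muc_pos q hd hτ hint x hx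
  constructor
  · intro w hw hwi
    have hwe : w ∈ τ.erase x := by
      rcases Finset.mem_insert.1 hw with h | h
      · exact absurd h hwi
      · exact h
    have hwτ : w ∈ τ := Finset.mem_of_mem_erase hwe
    have hne : (⟨x, hx⟩ : ↑τ) ≠ ⟨w, hwτ⟩ := by
      intro he
      exact (Finset.mem_erase.1 hwe).1 (congrArg Subtype.val he).symm
    simp only [AffineMap.coe_smul, Pi.smul_apply, smul_eq_mul]
    rw [fbasis_coord_ne q hd τ hτ _ _ hne, mul_zero]
  · simp only [AffineMap.coe_smul, Pi.smul_apply, smul_eq_mul]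
    rw [show (fbasis q hd τ hτ).coord ⟨x, hx⟩ (projZ (q i)) = muc q hd hτ (i := i) x hx from rfl]
    field_simp

lemma stellar_wallMap_u (x : ℕ) (hx : x ∈ τ) (u : ℕ) (hu : u ∈ τ.erase x) :
    IsWallMap q (insert i (τ.erase x)) u
      ((fbasis q hd τ hτ).coord ⟨u, Finset.mem_of_mem_erase hu⟩ -
        (muc q hd hτ (i := i) u (Finset.mem_of_mem_erase hu) / muc q hd hτ (i := i) x hx) •
          (fbasis q hd τ hτ).coord ⟨x, hx⟩) := by
  have hμ := muc_pos q hd hτ hint x hx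
  have huτ : u ∈ τ := Finset.mem_of_mem_erase hu
  constructor
  · intro w hw hwu
    simp only [AffineMap.coe_sub, AffineMap.coe_smul, Pi.sub_apply, Pi.smul_apply, smul_eq_mul]
    rcases Finset.mem_insert.1 hw with h | h
    · subst h
      have e1 : (fbasis q hd τ hτ).coord ⟨u, huτ⟩ (projZ (q w)) =
        muc q hd hτ (i := w) u huτ := rfl
      have e2 : (fbasis q hd τ hτ).coord ⟨x, hx⟩ (projZ (q w)) =
        muc q hd hτ (i := w) x hx := rfl
      rw [e1, e2]
      field_simp
      ring
    · have hwτ : w ∈ τ := Finset.mem_of_mem_erase h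
      rw [fbasis_coord_ne q hd τ hτ ⟨u, huτ⟩ ⟨w, hwτ⟩
        (fun he => hwu (congrArg Subtype.val he).symm)]
      rw [fbasis_coord_ne q hd τ hτ ⟨x, hx⟩ ⟨w, hwτ⟩
        (fun he => (Finset.mem_erase.1 h).1 (congrArg Subtype.val he).symm)]
      ring
  · simp only [AffineMap.coe_sub, AffineMap.coe_smul, Pi.sub_apply, Pi.smul_apply, smul_eq_mul]
    rw [fbasis_coord_self q hd τ hτ ⟨u, huτ⟩]
    rw [fbasis_coord_ne q hd τ hτ ⟨x, hx⟩ ⟨u, huτ⟩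
      (fun he => (Finset.mem_erase.1 hu).1 (congrArg Subtype.val he).symm)]
    ring

/-- K1: any wall map of the new facet opposite to `i` is `μ⁻¹·coord_x` -/
lemma stellar_eval_wm_i (x : ℕ) (hx : x ∈ τ) {ψ : (Fin (d-1) → ℝ) →ᵃ[ℝ] ℝ}
    (hψ : IsWallMap q (insert i (τ.erase x)) i ψ) (p : Fin (d-1) → ℝ) :
    ψ p = (muc q hd hτ (i := i) x hx)⁻¹ * (fbasis q hd τ hτ).coord ⟨x, hx⟩ p := by
  have h := wallMap_unique q hd (stellar_facetLike q hd hτ hiτ hint x hx) hψ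
    (stellar_wallMap_i q hd hτ hiτ hint x hx) (Finset.mem_insert_self _ _) p
  rw [h]
  simp [AffineMap.coe_smul]

/-- K2: any wall map of the new facet opposite to old vertex `u` -/
lemma stellar_eval_wm_u (x : ℕ) (hx : x ∈ τ) (u : ℕ) (hu : u ∈ τ.erase x)
    {ψ : (Fin (d-1) → ℝ) →ᵃ[ℝ] ℝ}
    (hψ : IsWallMap q (insert i (τ.erase x)) u ψ) (p : Fin (d-1) → ℝ) :
    ψ p = (fbasis q hd τ hτ).coord ⟨u, Finset.mem_of_mem_erase hu⟩ p -
      (muc q hd hτ (i := i) u (Finset.mem_of_mem_erase hu) / muc q hd hτ (i := i) x hx) *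
        (fbasis q hd τ hτ).coord ⟨x, hx⟩ p := by
  have hmem : u ∈ insert i (τ.erase x) := Finset.mem_insert_of_mem hu
  have h := wallMap_unique q hd (stellar_facetLike q hd hτ hiτ hint x hx) hψ
    (stellar_wallMap_u q hd hτ hiτ hint x hx u hu) hmem p
  rw [h]
  simp [AffineMap.coe_sub, AffineMap.coe_smul]

/-- K2': value at the removed vertex `x` is negative -/
lemma stellar_eval_wm_u_at_x (x : ℕ) (hx : x ∈ τ) (u : ℕ) (hu : u ∈ τ.erase x)
    {ψ : (Fin (d-1) → ℝ) →ᵃ[ℝ] ℝ}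
    (hψ : IsWallMap q (insert i (τ.erase x)) u ψ) :
    ψ (projZ (q x)) < 0 := by
  rw [stellar_eval_wm_u q hd hτ hiτ hint x hx u hu hψ]
  have huτ := Finset.mem_of_mem_erase hu
  rw [fbasis_coord_ne q hd τ hτ ⟨u, huτ⟩ ⟨x, hx⟩
    (fun he => (Finset.mem_erase.1 hu).1 (congrArg Subtype.val he))]
  rw [fbasis_coord_self q hd τ hτ ⟨x, hx⟩]
  have h1 := muc_pos q hd hτ hint x hx
  have h2 := muc_pos q hd hτ hint u huτ
  have : 0 < muc q hd hτ (i := i) u huτ / muc q hd hτ (i := i) x hx := div_pos h2 h1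
  linarith

/-- K3: the new cells lie (weakly) behind each other's walls -/
lemma stellar_cells_sep (x y : ℕ) (hx : x ∈ τ) (hy : y ∈ τ.erase x)
    {p : Fin (d-1) → ℝ} (hp : p ∈ cellq q (insert i (τ.erase y)))
    {ψ : (Fin (d-1) → ℝ) →ᵃ[ℝ] ℝ}
    (hψ : IsWallMap q (insert i (τ.erase x)) y ψ) : ψ p ≤ 0 := by
  have hyτ : y ∈ τ := Finset.mem_of_mem_erase hy
  rw [stellar_eval_wm_u q hd hτ hiτ hint x hx y hy hψ]
  set φ : (Fin (d-1) → ℝ) →ᵃ[ℝ] ℝ := (fbasis q hd τ hτ).coord ⟨y, hyτ⟩ -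
      (muc q hd hτ (i := i) y hyτ / muc q hd hτ (i := i) x hx) •
        (fbasis q hd τ hτ).coord ⟨x, hx⟩ with hφ
  have : φ p ≤ 0 := by
    apply convexHull_le_halfspace _ p hp
    rintro z ⟨v, hv, rfl⟩
    simp only [Finset.coe_insert, Set.mem_insert_iff, Finset.mem_coe] at hv
    rw [hφ]
    simp only [AffineMap.coe_sub, AffineMap.coe_smul, Pi.sub_apply, Pi.smul_apply, smul_eq_mul]
    have h1 := muc_pos q hd hτ hint x hx
    rcases hv with rfl | hv
    · -- v = i
      have e1 : (fbasis q hd τ hτ).coord ⟨y, hyτ⟩ (projZ (q v)) =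
        muc q hd hτ (i := v) y hyτ := rfl
      have e2 : (fbasis q hd τ hτ).coord ⟨x, hx⟩ (projZ (q v)) =
        muc q hd hτ (i := v) x hx := rfl
      rw [e1, e2]
      field_simp
      norm_num
    · have hvτ : v ∈ τ := Finset.mem_of_mem_erase hv
      by_cases hvx : v = x
      · rw [hvx]
        rw [fbasis_coord_ne q hd τ hτ ⟨y, hyτ⟩ ⟨x, hx⟩
          (fun he => (Finset.mem_erase.1 hy).1 (congrArg Subtype.val he)),
          fbasis_coord_self q hd τ hτ ⟨x, hx⟩]
        have h2 := muc_pos q hd hτ hint y hyτ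
        have : 0 < muc q hd hτ (i := i) y hyτ / muc q hd hτ (i := i) x hx := div_pos h2 h1
        linarith
      · rw [fbasis_coord_ne q hd τ hτ ⟨y, hyτ⟩ ⟨v, hvτ⟩
          (fun he => (Finset.mem_erase.1 hv).1 (congrArg Subtype.val he).symm),
          fbasis_coord_ne q hd τ hτ ⟨x, hx⟩ ⟨v, hvτ⟩
          (fun he => hvx (congrArg Subtype.val he).symm)]
        ring_nf
        exact le_refl 0
  calc (fbasis q hd τ hτ).coord ⟨y, hyτ⟩ p -
      muc q hd hτ (i := i) y hyτ / muc q hd hτ (i := i) x hx *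
        (fbasis q hd τ hτ).coord ⟨x, hx⟩ p = φ p := by
        rw [hφ]; simp [AffineMap.coe_sub, AffineMap.coe_smul]
    _ ≤ 0 := this

/-- K4: transfer of a separating wall from `τ` to a new facet -/
lemma stellar_transfer (x : ℕ) (hx : x ∈ τ) {p : Fin (d-1) → ℝ} {u0 : ℕ} (hu0 : u0 ∈ τ)
    (hneg : (fbasis q hd τ hτ).coord ⟨u0, hu0⟩ p ≤ 0) :
    ∃ u ∈ insert i (τ.erase x), ∀ ψ, IsWallMap q (insert i (τ.erase x)) u ψ → ψ p ≤ 0 := by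
  have h1 := muc_pos q hd hτ hint x hx
  by_cases hux : u0 = x
  · subst hux
    refine ⟨i, Finset.mem_insert_self _ _, fun ψ hψ => ?_⟩
    rw [stellar_eval_wm_i q hd hτ hiτ hint u0 hx hψ]
    have : 0 < (muc q hd hτ (i := i) u0 hx)⁻¹ := by positivity
    exact mul_nonpos_of_nonneg_of_nonpos (le_of_lt this) hneg
  · have hu0e : u0 ∈ τ.erase x := Finset.mem_erase.2 ⟨hux, hu0⟩
    rcases le_or_gt 0 ((fbasis q hd τ hτ).coord ⟨x, hx⟩ p) with hcx | hcx
    · refine ⟨u0, Finset.mem_insert_of_mem hu0e, fun ψ hψ => ?_⟩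
      rw [stellar_eval_wm_u q hd hτ hiτ hint x hx u0 hu0e hψ]
      have h2 := muc_pos q hd hτ hint u0 hu0
      have hq : 0 ≤ muc q hd hτ (i := i) u0 hu0 / muc q hd hτ (i := i) x hx :=
        le_of_lt (div_pos h2 h1)
      have : (fbasis q hd τ hτ).coord ⟨u0, Finset.mem_of_mem_erase hu0e⟩ p =
        (fbasis q hd τ hτ).coord ⟨u0, hu0⟩ p := rfl
      rw [this]
      nlinarith
    · refine ⟨i, Finset.mem_insert_self _ _, fun ψ hψ => ?_⟩
      rw [stellar_eval_wm_i q hd hτ hiτ hint x hx hψ]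
      have : 0 < (muc q hd hτ (i := i) x hx)⁻¹ := by positivity
      nlinarith

/-- K5 -/
lemma stellar_cell_subset (x : ℕ) (hx : x ∈ τ) :
    cellq q (insert i (τ.erase x)) ⊆ cellq q τ := by
  apply convexHull_min
  · rintro z ⟨v, hv, rfl⟩
    simp only [Finset.coe_insert, Set.mem_insert_iff, Finset.mem_coe] at hv
    rcases hv with rfl | hv
    · exact interior_subset hint
    · exact subset_convexHull ℝ _ ⟨v, Finset.mem_of_mem_erase hv, rfl⟩
  · exact convex_convexHull ℝ _

end Stk
namespace Stk

set_option linter.unusedSectionVars false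
set_option maxHeartbeats 1000000

variable (d : ℕ) (q : ℕ → (Fin d → ℝ)) (σ : ℕ → Finset ℕ)

/-- the inductive invariant: the projected facets form a simplicial subdivision -/
structure Good (hd : 2 ≤ d) (m : ℕ) : Prop where
  gB : Finset.Icc 1 d ∈ facets d σ m
  glike : ∀ F ∈ facets d σ m, IsFacetLike q F hd
  gsub : ∀ F ∈ facets d σ m, F ⊆ Finset.Icc 1 m
  gdelta : ∀ v ∈ Finset.Icc 1 m, projZ (q v) ∈ cellq q (Finset.Icc 1 d)
  gmem : ∀ v ∈ Finset.Icc 1 m, ∃ F ∈ facets d σ m, F ≠ Finset.Icc 1 d ∧ v ∈ F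
  gridge : ∀ H ∈ facets d σ m, H ≠ Finset.Icc 1 d → ∀ u ∈ H,
    ¬(H.erase u ⊆ Finset.Icc 1 d) →
    ∃ G ∈ facets d σ m, G ≠ Finset.Icc 1 d ∧ G ∩ H = H.erase u ∧ ∃ t ∈ G, t ∉ H ∧
      ∀ ψ : (Fin (d-1) → ℝ) →ᵃ[ℝ] ℝ, IsWallMap q H u ψ → ψ (projZ (q t)) < 0
  gdisj : ∀ G ∈ facets d σ m, ∀ H ∈ facets d σ m, G ≠ Finset.Icc 1 d →
    H ≠ Finset.Icc 1 d → G ≠ H → ∀ p ∈ cellq q H,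
    ∃ u ∈ G, ∀ ψ : (Fin (d-1) → ℝ) →ᵃ[ℝ] ℝ, IsWallMap q G u ψ → ψ p ≤ 0

lemma facets_init : facets d σ (d+1) = (Finset.Icc 1 (d+1)).powersetCard d := by
  unfold facets
  have : d + 1 - (d + 1) = 0 := by omega
  rw [this]
  rfl

lemma facets_step (m : ℕ) (hm : d + 1 ≤ m) :
    facets d σ (m+1) = ((facets d σ m).erase (σ (m+1))) ∪
      (σ (m+1)).image (fun x => insert (m+1) ((σ (m+1)).erase x)) := by
  unfold facets
  have h1 : m + 1 - (d+1) = (m - (d+1)) + 1 := by omega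
  rw [h1]
  show facetsAux d σ ((m - (d+1)) + 1) = _
  have h2 : d + 2 + (m - (d+1)) = m + 1 := by omega
  rw [facetsAux, h2]

lemma mem_facets_init (F : Finset ℕ) (hd : 2 ≤ d) : F ∈ facets d σ (d+1) ↔
    (F = Finset.Icc 1 d ∨
      ∃ x ∈ Finset.Icc 1 d, F = insert (d+1) ((Finset.Icc 1 d).erase x)) := by
  rw [facets_init, Finset.mem_powersetCard]
  constructor
  · rintro ⟨hsub, hcard⟩
    have hcard' : (Finset.Icc 1 (d+1)).card = d + 1 := by
      rw [Nat.card_Icc]; omega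
    have hsd : ((Finset.Icc 1 (d+1)) \ F).card = 1 := by
      rw [Finset.card_sdiff_of_subset hsub, hcard', hcard]; omega
    rcases Finset.card_eq_one.1 hsd with ⟨x, hx⟩
    have hxmem : x ∈ Finset.Icc 1 (d+1) ∧ x ∉ F := by
      have : x ∈ (Finset.Icc 1 (d+1)) \ F := by rw [hx]; exact Finset.mem_singleton_self x
      exact ⟨(Finset.mem_sdiff.1 this).1, (Finset.mem_sdiff.1 this).2⟩
    have hF : F = (Finset.Icc 1 (d+1)).erase x := by
      ext w
      simp only [Finset.mem_erase]
      constructor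
      · intro hw
        exact ⟨fun he => hxmem.2 (he ▸ hw), hsub hw⟩
      · rintro ⟨hwx, hw⟩
        by_contra hwF
        have : w ∈ (Finset.Icc 1 (d+1)) \ F := Finset.mem_sdiff.2 ⟨hw, hwF⟩
        rw [hx] at this
        exact hwx (Finset.mem_singleton.1 this)
    rw [Finset.mem_Icc] at hxmem
    by_cases hxd : x = d + 1
    · left
      rw [hF, hxd]
      ext w
      simp only [Finset.mem_erase, Finset.mem_Icc]
      omega
    · right
      refine ⟨x, Finset.mem_Icc.2 ⟨hxmem.1.1, by omega⟩, ?_⟩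
      rw [hF]
      ext w
      simp only [Finset.mem_erase, Finset.mem_insert, Finset.mem_Icc]
      omega
  · rintro (rfl | ⟨x, hx, rfl⟩)
    · constructor
      · intro w hw
        rw [Finset.mem_Icc] at *
        omega
      · rw [Nat.card_Icc]; omega
    · rw [Finset.mem_Icc] at hx
      constructor
      · intro w hw
        simp only [Finset.mem_insert, Finset.mem_erase, Finset.mem_Icc] at hw ⊢
        omega
      · rw [Finset.card_insert_of_notMem, Finset.card_erase_of_mem, Nat.card_Icc]
        · omega
        · rw [Finset.mem_Icc]; omega
        · simp only [Finset.mem_erase, Finset.mem_Icc]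
          omega

lemma base_facetLike (hd : 2 ≤ d)
    (hindep : AffineIndependent ℝ (fun i : Fin d => projZ (q ((i : ℕ) + 1)))) :
    IsFacetLike q (Finset.Icc 1 d) hd := by
  constructor
  · rw [Nat.card_Icc]; omega
  · have hemb : Function.Injective (fun v : ↑(Finset.Icc 1 d) =>
        (⟨(v : ℕ) - 1, by
          have := v.2; rw [Finset.mem_Icc] at this; omega⟩ : Fin d)) := by
      intro v w hvw
      have hv := v.2
      have hw := w.2
      rw [Finset.mem_Icc] at hv hw
      have h2 : (v : ℕ) - 1 = (w : ℕ) - 1 := by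
        simpa using congrArg Fin.val hvw
      exact Subtype.ext (by omega)
    set e : ↑(Finset.Icc 1 d) ↪ Fin d := ⟨_, hemb⟩ with he
    have hcomp := hindep.comp_embedding e
    have heq2 : famq q (Finset.Icc 1 d) =
        (fun i : Fin d => projZ (q ((i : ℕ) + 1))) ∘ ⇑e := by
      funext v
      have hv := v.2
      rw [Finset.mem_Icc] at hv
      show projZ (q ↑v) = projZ (q ((v : ℕ) - 1 + 1))
      have hvv : (v : ℕ) - 1 + 1 = (v : ℕ) := by omega
      rw [hvv]
    rw [heq2]
    exact hcomp

end Stk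
namespace Stk

set_option linter.unusedSectionVars false
set_option maxHeartbeats 1000000

variable (d : ℕ) (q : ℕ → (Fin d → ℝ)) (σ : ℕ → Finset ℕ)

lemma good_init (hd : 2 ≤ d)
    (hindep : AffineIndependent ℝ (fun i : Fin d => projZ (q ((i : ℕ) + 1))))
    (hfirst : projZ (q (d + 1)) ∈
      interior (convexHull ℝ ((fun v => projZ (q v)) '' (Finset.Icc 1 d)))) :
    Good d q σ hd (d+1) := by
  have hB : IsFacetLike q (Finset.Icc 1 d) hd := base_facetLike d q hd hindep
  have hiB : d + 1 ∉ Finset.Icc 1 d := by simp [Finset.mem_Icc]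
  have hint : projZ (q (d+1)) ∈ interior (cellq q (Finset.Icc 1 d)) := hfirst
  have hFxneB : ∀ x, insert (d+1) ((Finset.Icc 1 d).erase x) ≠ Finset.Icc 1 d := by
    intro x he
    have : d + 1 ∈ Finset.Icc 1 d := he ▸ Finset.mem_insert_self _ _
    rw [Finset.mem_Icc] at this
    omega
  have hmm := mem_facets_init d σ
  constructor
  -- gB
  · exact (hmm _ hd).2 (Or.inl rfl)
  -- glike
  · intro F hF
    rcases (hmm F hd).1 hF with rfl | ⟨x, hx, rfl⟩
    · exact hB
    · exact stellar_facetLike q hd hB hiB hint x hx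
  -- gsub
  · intro F hF
    rcases (hmm F hd).1 hF with rfl | ⟨x, hx, rfl⟩
    · intro w hw
      rw [Finset.mem_Icc] at *
      omega
    · intro w hw
      simp only [Finset.mem_insert, Finset.mem_erase, Finset.mem_Icc] at hw ⊢
      omega
  -- gdelta
  · intro v hv
    rw [Finset.mem_Icc] at hv
    by_cases hvd : v = d + 1
    · subst hvd
      exact interior_subset hint
    · exact subset_convexHull ℝ _ ⟨v, by
        simp only [Finset.coe_Icc, Set.mem_Icc]; omega, rfl⟩
  -- gmem
  · intro v hv
    rw [Finset.mem_Icc] at hv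
    by_cases hvd : v = d + 1
    · refine ⟨insert (d+1) ((Finset.Icc 1 d).erase 1), (hmm _ hd).2 (Or.inr ⟨1, ?_, rfl⟩),
        hFxneB 1, ?_⟩
      · rw [Finset.mem_Icc]; omega
      · rw [hvd]; exact Finset.mem_insert_self _ _
    · have hvB : v ∈ Finset.Icc 1 d := by rw [Finset.mem_Icc]; omega
      have hcard : 1 < (Finset.Icc 1 d).card := by rw [Nat.card_Icc]; omega
      rcases Finset.exists_mem_ne hcard v with ⟨x, hx, hxv⟩
      refine ⟨insert (d+1) ((Finset.Icc 1 d).erase x), (hmm _ hd).2 (Or.inr ⟨x, hx, rfl⟩),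
        hFxneB x, ?_⟩
      exact Finset.mem_insert_of_mem (Finset.mem_erase.2 ⟨fun h => hxv h.symm, hvB⟩)
  -- gridge
  · intro H hH hHneB u hu hwall
    rcases (hmm H hd).1 hH with rfl | ⟨x, hx, rfl⟩
    · exact absurd rfl hHneB
    · have hxIcc := hx
      rw [Finset.mem_Icc] at hxIcc
      by_cases hud : u = d + 1
    -- wall is in the base facet: contradiction with hwall
      · exfalso
        apply hwall
        subst hud
        rw [Finset.erase_insert (by
          simp only [Finset.mem_erase, Finset.mem_Icc]; omega)]
        intro w hw
        exact Finset.mem_of_mem_erase hw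
      · have hue : u ∈ (Finset.Icc 1 d).erase x := by
          rcases Finset.mem_insert.1 hu with h | h
          · exact absurd h hud
          · exact h
        have huIcc := Finset.mem_of_mem_erase hue
        have huIcc' := huIcc
        rw [Finset.mem_Icc] at huIcc'
        have hux : u ≠ x := (Finset.mem_erase.1 hue).1
        refine ⟨insert (d+1) ((Finset.Icc 1 d).erase u), (hmm _ hd).2 (Or.inr ⟨u, huIcc, rfl⟩),
          hFxneB u, ?_, x, ?_, ?_, ?_⟩
        · -- intersection computation
          ext w
          simp only [Finset.mem_inter, Finset.mem_insert, Finset.mem_erase, Finset.mem_Icc]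
          constructor
          · rintro ⟨h1 | h1, h2⟩
            · exact ⟨by omega, h2⟩
            · rcases h2 with h2 | h2
              · omega
              · exact ⟨h1.1, Or.inr h2⟩
          · rintro ⟨h1, h2 | h2⟩
            · exact ⟨Or.inl h2, Or.inl h2⟩
            · exact ⟨Or.inr ⟨h1, h2.2⟩, Or.inr h2⟩
        · exact Finset.mem_insert_of_mem (Finset.mem_erase.2 ⟨fun h => hux h.symm, hx⟩)
        · intro hcon
          rcases Finset.mem_insert.1 hcon with h | h
          · omega
          · exact (Finset.mem_erase.1 h).1 rfl
        · intro ψ hψ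
          exact stellar_eval_wm_u_at_x q hd hB hiB hint x hx u hue hψ
  -- gdisj
  · intro G hG H hH hGneB hHneB hGH p hp
    rcases (hmm G hd).1 hG with rfl | ⟨x, hx, rfl⟩
    · exact absurd rfl hGneB
    rcases (hmm H hd).1 hH with rfl | ⟨y, hy, rfl⟩
    · exact absurd rfl hHneB
    have hxy : x ≠ y := by
      intro he
      exact hGH (by rw [he])
    have hye : y ∈ (Finset.Icc 1 d).erase x := Finset.mem_erase.2 ⟨fun h => hxy h.symm, hy⟩
    refine ⟨y, Finset.mem_insert_of_mem hye, fun ψ hψ => ?_⟩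
    exact stellar_cells_sep q hd hB hiB hint x y hx hye hp hψ
end Stk
namespace Stk

set_option linter.unusedSectionVars false
set_option maxHeartbeats 2000000

variable (d : ℕ) (q : ℕ → (Fin d → ℝ)) (σ : ℕ → Finset ℕ)

lemma good_step (hd : 2 ≤ d) (m : ℕ) (hm : d + 1 ≤ m)
    (hσm : σ (m+1) ∈ facets d σ m) (hσB : σ (m+1) ≠ Finset.Icc 1 d)
    (hstk : projZ (q (m+1)) ∈
      interior (convexHull ℝ ((fun v => projZ (q v)) '' (σ (m+1)))))
    (hg : Good d q σ hd m) : Good d q σ hd (m+1) := by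
  set τ := σ (m+1) with hτdef
  have hτlike : IsFacetLike q τ hd := hg.glike τ hσm
  have hτsub : τ ⊆ Finset.Icc 1 m := hg.gsub τ hσm
  have hiτ : m + 1 ∉ τ := fun h => by
    have := hτsub h; rw [Finset.mem_Icc] at this; omega
  have hint : projZ (q (m+1)) ∈ interior (cellq q τ) := hstk
  have hstep := facets_step d σ m hm
  have hmem : ∀ F, F ∈ facets d σ (m+1) ↔
      ((F ∈ facets d σ m ∧ F ≠ τ) ∨ ∃ x ∈ τ, F = insert (m+1) (τ.erase x)) := by
    intro F
    rw [hstep, Finset.mem_union, Finset.mem_erase, Finset.mem_image]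
    constructor
    · rintro (⟨h1, h2⟩ | ⟨x, hx, rfl⟩)
      · exact Or.inl ⟨h2, h1⟩
      · exact Or.inr ⟨x, hx, rfl⟩
    · rintro (⟨h1, h2⟩ | ⟨x, hx, rfl⟩)
      · exact Or.inl ⟨h2, h1⟩
      · exact Or.inr ⟨x, hx, rfl⟩
  have hnotnew : ∀ F ∈ facets d σ m, m + 1 ∉ F := fun F hF h => by
    have := hg.gsub F hF h; rw [Finset.mem_Icc] at this; omega
  have hnewneB : ∀ x : ℕ, insert (m+1) (τ.erase x) ≠ Finset.Icc 1 d := by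
    intro x he
    have : m + 1 ∈ Finset.Icc 1 d := he ▸ Finset.mem_insert_self _ _
    rw [Finset.mem_Icc] at this; omega
  have hτcard2 : 1 < τ.card := by rw [hτlike.1]; omega
  constructor
  -- gB
  · exact (hmem _).2 (Or.inl ⟨hg.gB, fun h => hσB h.symm⟩)
  -- glike
  · intro F hF
    rcases (hmem F).1 hF with ⟨h1, _⟩ | ⟨x, hx, rfl⟩
    · exact hg.glike F h1
    · exact stellar_facetLike q hd hτlike hiτ hint x hx
  -- gsub
  · intro F hF
    rcases (hmem F).1 hF with ⟨h1, _⟩ | ⟨x, hx, rfl⟩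
    · intro w hw
      have := hg.gsub F h1 hw
      rw [Finset.mem_Icc] at *
      omega
    · intro w hw
      rcases Finset.mem_insert.1 hw with rfl | hw
      · rw [Finset.mem_Icc]; omega
      · have := hτsub (Finset.mem_of_mem_erase hw)
        rw [Finset.mem_Icc] at *
        omega
  -- gdelta
  · intro v hv
    rw [Finset.mem_Icc] at hv
    by_cases hvm : v = m + 1
    · subst hvm
      have hcellτΔ : cellq q τ ⊆ cellq q (Finset.Icc 1 d) := by
        apply convexHull_min
        · rintro z ⟨w, hw, rfl⟩
          exact hg.gdelta w (hτsub hw)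
        · exact convex_convexHull ℝ _
      exact hcellτΔ (interior_subset hint)
    · exact hg.gdelta v (by rw [Finset.mem_Icc]; omega)
  -- gmem
  · intro v hv
    rw [Finset.mem_Icc] at hv
    by_cases hvm : v = m + 1
    · obtain ⟨x, hx⟩ := Finset.card_pos.1 (by omega : 0 < τ.card)
      refine ⟨insert (m+1) (τ.erase x), (hmem _).2 (Or.inr ⟨x, hx, rfl⟩), hnewneB x, ?_⟩
      rw [hvm]; exact Finset.mem_insert_self _ _
    · rcases hg.gmem v (by rw [Finset.mem_Icc]; omega) with ⟨F, hF, hFneB, hvF⟩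
      by_cases hFτ : F = τ
      · rcases Finset.exists_mem_ne hτcard2 v with ⟨x, hx, hxv⟩
        refine ⟨insert (m+1) (τ.erase x), (hmem _).2 (Or.inr ⟨x, hx, rfl⟩), hnewneB x, ?_⟩
        exact Finset.mem_insert_of_mem (Finset.mem_erase.2 ⟨fun h => hxv h.symm,
          hFτ ▸ hvF⟩)
      · exact ⟨F, (hmem F).2 (Or.inl ⟨hF, hFτ⟩), hFneB, hvF⟩
  -- gridge
  · intro H hH hHneB u hu hwall
    rcases (hmem H).1 hH with ⟨hHold, hHneτ⟩ | ⟨x, hx, rfl⟩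
    · -- H is an old facet
      rcases hg.gridge H hHold hHneB u hu hwall with
        ⟨G, hGf, hGneB, hGH, t, htG, htH, hside⟩
      by_cases hGτ : G = τ
      · -- the partner was τ: replace it by the new facet through the wall
        subst hGτ
        have htτ : t ∈ τ := htG
        have hτH : τ ∩ H = H.erase u := hGH
        have hτsplit : ∀ w ∈ τ, w ≠ t → w ∈ H.erase u := by
          intro w hwτ hwt
          by_contra hwn
          have hw2 : w ∈ τ \ (τ ∩ H) := Finset.mem_sdiff.2 ⟨hwτ, fun hc => hwn (hτH ▸ hc)⟩
          have ht2 : t ∈ τ \ (τ ∩ H) :=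
            Finset.mem_sdiff.2 ⟨htτ, fun hc => htH (Finset.mem_inter.1 hc).2⟩
          have hpair : ({w, t} : Finset ℕ) ⊆ τ \ (τ ∩ H) := by
            intro z hz
            rcases Finset.mem_insert.1 hz with rfl | hz
            · exact hw2
            · rw [Finset.mem_singleton.1 hz]; exact ht2
          have hc1 : (τ \ (τ ∩ H)).card = 1 := by
            rw [Finset.card_sdiff_of_subset Finset.inter_subset_left, hτH,
              Finset.card_erase_of_mem hu, hτlike.1, (hg.glike H hHold).1]
            omega
          have := Finset.card_le_card hpair
          rw [Finset.card_pair hwt, hc1] at this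
          omega
        refine ⟨insert (m+1) (τ.erase t), (hmem _).2 (Or.inr ⟨t, htτ, rfl⟩), hnewneB t,
          ?_, m+1, Finset.mem_insert_self _ _, hnotnew H hHold, ?_⟩
        · ext w
          simp only [Finset.mem_inter, Finset.mem_insert, Finset.mem_erase]
          constructor
          · rintro ⟨rfl | ⟨hwt, hwτ⟩, hwH⟩
            · exact absurd hwH (hnotnew H hHold)
            · have : w ∈ τ ∩ H := Finset.mem_inter.2 ⟨hwτ, hwH⟩
              rw [hτH] at this
              exact ⟨(Finset.mem_erase.1 this).1, hwH⟩
          · rintro ⟨hwu, hwH⟩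
            have hwτH : w ∈ τ ∩ H := by
              rw [hτH]; exact Finset.mem_erase.2 ⟨hwu, hwH⟩
            have hwτ : w ∈ τ := (Finset.mem_inter.1 hwτH).1
            exact ⟨Or.inr ⟨fun he => htH (he ▸ hwH), hwτ⟩, hwH⟩
        · intro ψ hψ
          have hexp := apply_eq_sum_coords (fbasis q hd τ hτlike) ψ (projZ (q (m+1)))
          rw [hexp]
          rw [Finset.sum_eq_single (⟨t, htτ⟩ : ↑τ)]
          · exact mul_neg_of_pos_of_neg (muc_pos q hd hτlike hint t htτ) (hside ψ hψ)
          · intro v _ hv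
            have hvτ := v.2
            have hvt : (↑v : ℕ) ≠ t := fun he => hv (Subtype.ext he)
            have hvHe := hτsplit ↑v hvτ hvt
            have h0 : ψ ((fbasis q hd τ hτlike) v) = 0 :=
              hψ.1 ↑v (Finset.mem_of_mem_erase hvHe) (Finset.mem_erase.1 hvHe).1
            rw [h0, mul_zero]
          · intro hcon
            exact absurd (Finset.mem_univ _) hcon
      · -- the partner was not τ: it survives
        exact ⟨G, (hmem G).2 (Or.inl ⟨hGf, hGτ⟩), hGneB, hGH, t, htG, htH, hside⟩
    · -- H is a new facet
      have hxm : x ≤ m := by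
        have := hτsub hx; rw [Finset.mem_Icc] at this; omega
      by_cases hud : u = m + 1
      · -- wall opposite to the new vertex: partner of τ across (τ.erase x)
        subst hud
        have herase : (insert (m+1) (τ.erase x)).erase (m+1) = τ.erase x :=
          Finset.erase_insert (fun h => hiτ (Finset.mem_of_mem_erase h))
        rw [herase] at hwall
        rcases hg.gridge τ hσm hσB x hx hwall with
          ⟨G, hGf, hGneB, hGτ, t, htG, htτ, hside⟩
        have hGneτ : G ≠ τ := by
          intro he
          rw [he, Finset.inter_self] at hGτ
          exact (Finset.mem_erase.1 (hGτ ▸ hx)).1 rfl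
        have htm : t ≤ m := by
          have := hg.gsub G hGf htG; rw [Finset.mem_Icc] at this; omega
        refine ⟨G, (hmem G).2 (Or.inl ⟨hGf, hGneτ⟩), hGneB, ?_, t, htG, ?_, ?_⟩
        · -- G ∩ H = H.erase u = τ.erase x
          rw [herase]
          ext w
          simp only [Finset.mem_inter, Finset.mem_insert]
          constructor
          · rintro ⟨hwG, rfl | hw⟩
            · exact absurd hwG (hnotnew G hGf)
            · exact hw
          · intro hw
            have : w ∈ G ∩ τ := by rw [hGτ]; exact hw
            exact ⟨(Finset.mem_inter.1 this).1, Or.inr hw⟩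
        · -- t ∉ H
          intro hcon
          rcases Finset.mem_insert.1 hcon with h | h
          · omega
          · exact htτ (Finset.mem_of_mem_erase h)
        · intro ψ hψ
          have := stellar_eval_wm_i q hd hτlike hiτ hint x hx hψ (projZ (q t))
          rw [this]
          have hcoordneg : (fbasis q hd τ hτlike).coord ⟨x, hx⟩ (projZ (q t)) < 0 :=
            hside _ (coord_isWallMap q hd τ hτlike x hx)
          have hμ := muc_pos q hd hτlike hint x hx
          have hinv : 0 < (muc q hd hτlike (i := m+1) x hx)⁻¹ := by positivity
          exact mul_neg_of_pos_of_neg hinv hcoordneg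
      · -- wall opposite to an old vertex u ∈ τ.erase x: partner is the new facet at u
        have hue : u ∈ τ.erase x := by
          rcases Finset.mem_insert.1 hu with h | h
          · exact absurd h hud
          · exact h
        have huτ : u ∈ τ := Finset.mem_of_mem_erase hue
        have hum : u ≤ m := by
          have := hτsub huτ; rw [Finset.mem_Icc] at this; omega
        have hux : u ≠ x := (Finset.mem_erase.1 hue).1
        refine ⟨insert (m+1) (τ.erase u), (hmem _).2 (Or.inr ⟨u, huτ, rfl⟩), hnewneB u,
          ?_, x, ?_, ?_, ?_⟩
        · -- intersection
          ext w
          simp only [Finset.mem_inter, Finset.mem_insert, Finset.mem_erase]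
          constructor
          · rintro ⟨h1 | ⟨hwu, hwτ⟩, h2⟩
            · subst h1
              exact ⟨by omega, Or.inl rfl⟩
            · exact ⟨hwu, h2⟩
          · rintro ⟨hwu, h2 | ⟨hwx, hwτ⟩⟩
            · subst h2
              exact ⟨Or.inl rfl, Or.inl rfl⟩
            · exact ⟨Or.inr ⟨hwu, hwτ⟩, Or.inr ⟨hwx, hwτ⟩⟩
        · exact Finset.mem_insert_of_mem (Finset.mem_erase.2 ⟨fun h => hux h.symm, hx⟩)
        · intro hcon
          rcases Finset.mem_insert.1 hcon with h | h
          · omega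
          · exact (Finset.mem_erase.1 h).1 rfl
        · intro ψ hψ
          exact stellar_eval_wm_u_at_x q hd hτlike hiτ hint x hx u hue hψ
  -- gdisj
  · intro G hG H hH hGneB hHneB hGH p hp
    rcases (hmem G).1 hG with ⟨hGold, hGneτ⟩ | ⟨x, hx, rfl⟩
    · rcases (hmem H).1 hH with ⟨hHold, hHneτ⟩ | ⟨y, hy, rfl⟩
      · exact hg.gdisj G hGold H hHold hGneB hHneB hGH p hp
      · have hp' : p ∈ cellq q τ := stellar_cell_subset q hd hτlike hiτ hint y hy hp
        exact hg.gdisj G hGold τ hσm hGneB hσB hGneτ p hp'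
    · rcases (hmem H).1 hH with ⟨hHold, hHneτ⟩ | ⟨y, hy, rfl⟩
      · have hτneH : τ ≠ H := fun he => hHneτ he.symm
        rcases hg.gdisj τ hσm H hHold hσB hHneB hτneH p hp with ⟨u0, hu0, hbound⟩
        have hneg : (fbasis q hd τ hτlike).coord ⟨u0, hu0⟩ p ≤ 0 :=
          hbound _ (coord_isWallMap q hd τ hτlike u0 hu0)
        exact stellar_transfer q hd hτlike hiτ hint x hx hu0 hneg
      · have hxy : x ≠ y := fun he => hGH (by rw [he])
        have hye : y ∈ τ.erase x := Finset.mem_erase.2 ⟨fun h => hxy h.symm, hy⟩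
        exact ⟨y, Finset.mem_insert_of_mem hye,
          fun ψ hψ => stellar_cells_sep q hd hτlike hiτ hint x y hx hye hp hψ⟩

lemma good_all (hd : 2 ≤ d) (n : ℕ) (hn : d + 1 ≤ n)
    (hσ : ∀ i, d + 2 ≤ i → i ≤ n → σ i ∈ facets d σ (i - 1))
    (hB : ∀ i, d + 2 ≤ i → i ≤ n → σ i ≠ Finset.Icc 1 d)
    (hindep : AffineIndependent ℝ (fun i : Fin d => projZ (q ((i : ℕ) + 1))))
    (hfirst : projZ (q (d + 1)) ∈
      interior (convexHull ℝ ((fun v => projZ (q v)) '' (Finset.Icc 1 d))))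
    (hstack : ∀ i, d + 2 ≤ i → i ≤ n →
      projZ (q i) ∈ interior (convexHull ℝ ((fun v => projZ (q v)) '' (σ i)))) :
    Good d q σ hd n := by
  have key : ∀ m, d + 1 ≤ m → m ≤ n → Good d q σ hd m := by
    intro m hm
    induction m, hm using Nat.le_induction with
    | base => intro _; exact good_init d q σ hd hindep hfirst
    | succ m hm ih =>
      intro hmn
      have hg := ih (by omega)
      have h1 : σ (m+1) ∈ facets d σ m := by
        have := hσ (m+1) (by omega) (by omega)
        simpa using this
      exact good_step d q σ hd m hm h1 (hB (m+1) (by omega) (by omega))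
        (hstack (m+1) (by omega) (by omega)) hg
  exact key n hn (le_refl n)

end Stk
namespace Stk

set_option linter.unusedSectionVars false
set_option maxHeartbeats 2000000

lemma affineMap_sum_apply {m : ℕ} {ι : Type*} (s : Finset ι)
    (f : ι → ((Fin m → ℝ) →ᵃ[ℝ] ℝ)) (p : Fin m → ℝ) :
    (∑ i ∈ s, f i) p = ∑ i ∈ s, f i p := by
  classical
  induction s using Finset.induction_on with
  | empty => simp
  | insert _ _ ha ih =>
    rw [Finset.sum_insert ha, Finset.sum_insert ha, ← ih]
    simp [AffineMap.coe_add]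

variable {d : ℕ} (q : ℕ → (Fin d → ℝ)) (hd : 2 ≤ d)

/-- the affine interpolant of the lifted `z`-values over a facet -/
noncomputable def zmap (F : Finset ℕ) (h : IsFacetLike q F hd) :
    (Fin (d-1) → ℝ) →ᵃ[ℝ] ℝ :=
  ∑ u : ↑F, zc (q ↑u) • (fbasis q hd F h).coord u

lemma zmap_apply (F : Finset ℕ) (h : IsFacetLike q F hd) (p : Fin (d-1) → ℝ) :
    zmap q hd F h p = ∑ u : ↑F, zc (q ↑u) * (fbasis q hd F h).coord u p := by
  rw [zmap, affineMap_sum_apply]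
  apply Finset.sum_congr rfl
  intro u _
  simp [AffineMap.coe_smul]

lemma zmap_vertex (F : Finset ℕ) (h : IsFacetLike q F hd) (v : ℕ) (hv : v ∈ F) :
    zmap q hd F h (projZ (q v)) = zc (q v) := by
  classical
  rw [zmap_apply]
  rw [Finset.sum_eq_single (⟨v, hv⟩ : ↑F)]
  · rw [fbasis_coord_self q hd F h ⟨v, hv⟩, mul_one]
  · intro w _ hwv
    rw [fbasis_coord_ne q hd F h w ⟨v, hv⟩ hwv, mul_zero]
  · intro hcon
    exact absurd (Finset.mem_univ _) hcon

/-- any affine interpolant agrees with `zmap` everywhere -/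
lemma interpolant_unique (F : Finset ℕ) (h : IsFacetLike q F hd)
    {zF : (Fin (d-1) → ℝ) →ᵃ[ℝ] ℝ} (hzF : ∀ v ∈ F, zF (projZ (q v)) = zc (q v))
    (p : Fin (d-1) → ℝ) : zF p = zmap q hd F h p := by
  apply affine_eq_on_basis (fbasis q hd F h)
  rintro ⟨w, hw⟩
  rw [show (fbasis q hd F h) ⟨w, hw⟩ = projZ (q w) from rfl]
  rw [hzF w hw, zmap_vertex q hd F h w hw]

/-- identity relating the interpolants of two adjacent facets -/
lemma partner_identity {H G : Finset ℕ} (hHlike : IsFacetLike q H hd)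
    (hGlike : IsFacetLike q G hd) {u : ℕ} (hu : u ∈ H)
    (hGH : G ∩ H = H.erase u) (p : Fin (d-1) → ℝ) :
    zmap q hd G hGlike p = zmap q hd H hHlike p +
      (zmap q hd G hGlike (projZ (q u)) - zc (q u)) *
        (fbasis q hd H hHlike).coord ⟨u, hu⟩ p := by
  set ν := zmap q hd G hGlike (projZ (q u)) - zc (q u) with hν
  have : ∀ p', zmap q hd G hGlike p' =
      (zmap q hd H hHlike + ν • (fbasis q hd H hHlike).coord ⟨u, hu⟩) p' := by
    apply affine_eq_on_basis (fbasis q hd H hHlike)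
    rintro ⟨w, hw⟩
    rw [show (fbasis q hd H hHlike) ⟨w, hw⟩ = projZ (q w) from rfl]
    simp only [AffineMap.coe_add, AffineMap.coe_smul, Pi.add_apply, Pi.smul_apply,
      smul_eq_mul]
    by_cases hwu : w = u
    · subst hwu
      rw [fbasis_coord_self q hd H hHlike ⟨w, hw⟩, zmap_vertex q hd H hHlike w hw]
      rw [hν]
      ring
    · have hwe : w ∈ H.erase u := Finset.mem_erase.2 ⟨hwu, hw⟩
      have hwG : w ∈ G := by
        have : w ∈ G ∩ H := by rw [hGH]; exact hwe
        exact (Finset.mem_inter.1 this).1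
      rw [fbasis_coord_ne q hd H hHlike ⟨u, hu⟩ ⟨w, hw⟩
        (fun he => hwu (congrArg Subtype.val he).symm)]
      rw [zmap_vertex q hd G hGlike w hwG, zmap_vertex q hd H hHlike w hw]
      ring
  rw [this p]
  simp [AffineMap.coe_add, AffineMap.coe_smul]

end Stk
namespace Stk

set_option linter.unusedSectionVars false
set_option maxHeartbeats 2000000

variable {d : ℕ} (q : ℕ → (Fin d → ℝ)) (σ : ℕ → Finset ℕ) (hd : 2 ≤ d)

lemma nu_pos {n : ℕ}
    (hstress : ∀ F ∈ facets d σ n, ∀ G ∈ facets d σ n, F ≠ G →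
      (F ∩ G).card = d - 1 →
      ∀ Xs : Fin (d - 1) → ℕ, Function.Injective Xs → (∀ j, Xs j ∈ F ∩ G) →
      ∀ s ∈ F, s ∉ G →
      ∀ zF zG : (Fin (d - 1) → ℝ) →ᵃ[ℝ] ℝ,
        (∀ v ∈ F, zF (projZ (q v)) = zc (q v)) →
        (∀ v ∈ G, zG (projZ (q v)) = zc (q v)) →
        0 < (if F = Finset.Icc 1 d then (-1 : ℝ) else 1) *
          pdet (snoc' (fun j => q (Xs j)) (q s)) →
        (if F = Finset.Icc 1 d ∨ G = Finset.Icc 1 d then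
          (zG (projZ (q s)) - zF (projZ (q s))) /
            pdet (snoc' (fun j => q (Xs j)) (q s)) < 0
        else
          0 < (zG (projZ (q s)) - zF (projZ (q s))) /
            pdet (snoc' (fun j => q (Xs j)) (q s))))
    {H G : Finset ℕ} (hHf : H ∈ facets d σ n) (hGf : G ∈ facets d σ n)
    (hHneB : H ≠ Finset.Icc 1 d) (hGneB : G ≠ Finset.Icc 1 d)
    (hHlike : IsFacetLike q H hd) (hGlike : IsFacetLike q G hd)
    {u : ℕ} (hu : u ∈ H) (hGH : G ∩ H = H.erase u)
    {t : ℕ} (htG : t ∈ G) (htH : t ∉ H)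
    (hside : ∀ ψ : (Fin (d-1) → ℝ) →ᵃ[ℝ] ℝ, IsWallMap q H u ψ → ψ (projZ (q t)) < 0) :
    0 < zmap q hd G hGlike (projZ (q u)) - zc (q u) := by
  classical
  have hd1 : 0 < d := by omega
  have hXcard : (H.erase u).card = d - 1 := by
    rw [Finset.card_erase_of_mem hu, hHlike.1]
  set Xs' := (H.erase u).orderIsoOfFin hXcard with hXs'def
  set Xs : Fin (d-1) → ℕ := fun j => ↑(Xs' j) with hXsdef
  have hXsinj : Function.Injective Xs := fun a b hab => Xs'.injective (Subtype.ext hab)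
  have hXsX : ∀ j, Xs j ∈ H.erase u := fun j => (Xs' j).2
  have hXsur : ∀ w ∈ H.erase u, ∃ j, Xs j = w := by
    intro w hw
    refine ⟨Xs'.symm ⟨w, hw⟩, ?_⟩
    show ((Xs' (Xs'.symm ⟨w, hw⟩)) : ℕ) = w
    rw [OrderIso.apply_symm_apply]
  set Y : Fin (d-1) → (Fin (d-1) → ℝ) := fun j => projZ (q (Xs j)) with hYdef
  -- the points of H in the order (Xs, u) are affinely independent
  have hSind : AffineIndependent ℝ (snoc' Y (projZ (q u))) := by
    have hne_u : ∀ (j : Fin (d-1)), Xs j ≠ u := fun j => (Finset.mem_erase.1 (hXsX j)).1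
    have hemb : Function.Injective (fun j : Fin d =>
        (if h : (j : ℕ) < d - 1 then
          (⟨Xs ⟨j, h⟩, Finset.mem_of_mem_erase (hXsX ⟨j, h⟩)⟩ : ↑H)
         else ⟨u, hu⟩)) := by
      intro a b hab
      simp only [] at hab
      by_cases ha : (a:ℕ) < d - 1 <;> by_cases hb : (b:ℕ) < d - 1
      · rw [dif_pos ha, dif_pos hb] at hab
        have h2 : Xs ⟨a, ha⟩ = Xs ⟨b, hb⟩ := Subtype.mk_eq_mk.1 hab
        have h3 := hXsinj h2
        injection h3 with h4
        exact Fin.ext h4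
      · rw [dif_pos ha, dif_neg hb] at hab
        exact absurd (congrArg Subtype.val hab) (hne_u ⟨a, ha⟩)
      · rw [dif_neg ha, dif_pos hb] at hab
        exact absurd (congrArg Subtype.val hab).symm (hne_u ⟨b, hb⟩)
      · have := a.isLt
        have := b.isLt
        apply Fin.ext
        omega
    set e : Fin d ↪ ↑H := ⟨_, hemb⟩ with hedef
    have hind := hHlike.2.comp_embedding e
    have heq : famq q H ∘ ⇑e = snoc' Y (projZ (q u)) := by
      funext j
      simp only [Function.comp_apply, hedef, Function.Embedding.coeFn_mk]
      by_cases h : (j:ℕ) < d - 1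
      · rw [dif_pos h]
        show projZ (q (Xs ⟨j, h⟩)) = snoc' Y (projZ (q u)) j
        unfold snoc'
        rw [dif_pos h]
      · rw [dif_neg h]
        show projZ (q u) = snoc' Y (projZ (q u)) j
        unfold snoc'
        rw [dif_neg h]
    rwa [heq] at hind
  have hD0 : wallDet hd1 Y (projZ (q u)) ≠ 0 := by
    rw [wallDet_apply]
    exact mdet_ne_zero hd1 hSind
  -- identity between the wall determinant and the coordinate of u
  have hPid : ∀ p, wallDet hd1 Y p =
      wallDet hd1 Y (projZ (q u)) * (fbasis q hd H hHlike).coord ⟨u, hu⟩ p := by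
    intro p
    have := affine_eq_on_basis (fbasis q hd H hHlike)
      (f := wallDet hd1 Y)
      (g := wallDet hd1 Y (projZ (q u)) • (fbasis q hd H hHlike).coord ⟨u, hu⟩) ?_ p
    · rw [this]
      simp [AffineMap.coe_smul]
    · rintro ⟨w, hw⟩
      rw [show (fbasis q hd H hHlike) ⟨w, hw⟩ = projZ (q w) from rfl]
      simp only [AffineMap.coe_smul, Pi.smul_apply, smul_eq_mul]
      by_cases hwu : w = u
      · subst hwu
        have h1 : (fbasis q hd H hHlike).coord ⟨w, hu⟩ (projZ (q w)) = 1 :=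
          fbasis_coord_self q hd H hHlike ⟨w, hu⟩
        rw [h1, mul_one]
      · have h0 : (fbasis q hd H hHlike).coord ⟨u, hu⟩ (projZ (q w)) = 0 :=
          fbasis_coord_ne q hd H hHlike ⟨u, hu⟩ ⟨w, hw⟩
            (fun he => hwu (congrArg Subtype.val he).symm)
        rw [h0, mul_zero]
        rcases hXsur w (Finset.mem_erase.2 ⟨hwu, hw⟩) with ⟨j, hj⟩
        have h2 : projZ (q w) = Y j := by
          show projZ (q w) = projZ (q (Xs j))
          rw [hj]
        rw [h2, wallDet_vanish hd1 Y j]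
  have hpdet : ∀ s : ℕ, pdet (snoc' (fun j => q (Xs j)) (q s)) =
      wallDet hd1 Y (projZ (q s)) := by
    intro s
    rw [pdet_eq, wallDet_apply]
  have hne : H ≠ G := by
    intro he
    subst he
    rw [Finset.inter_self] at hGH
    have : u ∈ H.erase u := hGH ▸ hu
    exact (Finset.mem_erase.1 this).1 rfl
  have huG : u ∉ G := by
    intro hc
    have : u ∈ G ∩ H := Finset.mem_inter.2 ⟨hc, hu⟩
    rw [hGH] at this
    exact (Finset.mem_erase.1 this).1 rfl
  have hXsGH : ∀ j, Xs j ∈ G ∩ H := by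
    intro j
    rw [hGH]
    exact hXsX j
  have hzmH := fun w hw => zmap_vertex q hd H hHlike w hw
  have hzmG := fun w hw => zmap_vertex q hd G hGlike w hw
  have hGid := partner_identity q hd hHlike hGlike hu hGH
  have hct : (fbasis q hd H hHlike).coord ⟨u, hu⟩ (projZ (q t)) < 0 :=
    hside _ (coord_isWallMap q hd H hHlike u hu)
  have hnotor : ¬(H = Finset.Icc 1 d ∨ G = Finset.Icc 1 d) := by
    rintro (h | h)
    · exact hHneB h
    · exact hGneB h
  have hnotor' : ¬(G = Finset.Icc 1 d ∨ H = Finset.Icc 1 d) := by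
    rintro (h | h)
    · exact hGneB h
    · exact hHneB h
  rcases lt_or_gt_of_ne hD0 with hDneg | hDpos
  · -- D < 0 : use the instance with F := G, s := t
    have hcard : (G ∩ H).card = d - 1 := by rw [hGH]; exact hXcard
    have hprem : 0 < (if G = Finset.Icc 1 d then (-1:ℝ) else 1) *
        pdet (snoc' (fun j => q (Xs j)) (q t)) := by
      rw [if_neg hGneB, one_mul, hpdet t, hPid (projZ (q t))]
      exact mul_pos_of_neg_of_neg hDneg hct
    have happ := hstress G hGf H hHf (fun he => hne he.symm) hcard Xs hXsinj hXsGH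
      t htG htH (zmap q hd G hGlike) (zmap q hd H hHlike) hzmG hzmH hprem
    rw [if_neg hnotor'] at happ
    rw [hpdet t, hGid (projZ (q t))] at happ
    by_contra hν
    push_neg at hν
    -- numerator = -(ν * c) ≤ 0, denominator = D * c > 0 : contradiction
    set c := (fbasis q hd H hHlike).coord ⟨u, hu⟩ (projZ (q t)) with hc
    set ν := zmap q hd G hGlike (projZ (q u)) - zc (q u) with hνdef
    have hnum : zmap q hd H hHlike (projZ (q t)) -
        (zmap q hd H hHlike (projZ (q t)) + ν * c) = -(ν * c) := by ring
    rw [hnum] at happ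
    have hden : 0 < wallDet hd1 Y (projZ (q u)) * c := mul_pos_of_neg_of_neg hDneg hct
    have hnum2 : -(ν * c) ≤ 0 := by nlinarith
    have := div_nonpos_of_nonpos_of_nonneg hnum2 (le_of_lt hden)
    rw [hPid (projZ (q t))] at happ
    linarith
  · -- D > 0 : use the instance with F := H, s := u
    have hcard : (H ∩ G).card = d - 1 := by rw [Finset.inter_comm, hGH]; exact hXcard
    have hXsHG : ∀ j, Xs j ∈ H ∩ G := by
      intro j
      rw [Finset.inter_comm]
      exact hXsGH j
    have hprem : 0 < (if H = Finset.Icc 1 d then (-1:ℝ) else 1) *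
        pdet (snoc' (fun j => q (Xs j)) (q u)) := by
      rw [if_neg hHneB, one_mul, hpdet u]
      exact hDpos
    have happ := hstress H hHf G hGf hne hcard Xs hXsinj hXsHG
      u hu huG (zmap q hd H hHlike) (zmap q hd G hGlike) hzmH hzmG hprem
    rw [if_neg hnotor] at happ
    rw [hpdet u, hzmH u hu] at happ
    rcases div_pos_iff.1 happ with ⟨h1, _⟩ | ⟨_, h2⟩
    · exact h1
    · linarith
end Stk

set_option maxHeartbeats 2000000

/-- Lemma 4: let `q` be a lifting of a flat embedding of an abstract
stacking structure whose base facet `B = {1, …, d}` is never stacked on, with all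
`z`-coordinates nonnegative.  Suppose the stress `ω_X` is negative on every ridge `X`
incident to `B` and positive on every other ridge; here, for a ridge `X = F ∩ G` with
incident facets `F = X ∪ {s}` and `G`, taking any ordering `Xs` of `X`, if `F` is left of
`X` (i.e. `(if F = B then -1 else 1)·⟦q(Xs)∘q(s)⟧ > 0`, the sign being interchanged for the
base facet), then `ω_X = (z_G(π(q s)) − z_F(π(q s)))/⟦q(Xs)∘q(s)⟧` where `z_F, z_G` are the
affine maps whose graphs are the hyperplanes spanned by `q(F)` and `q(G)`.  Then `q`
realizes a convex polytope: all points lie in the closed halfspace below the hyperplane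
spanned by `q(F)` for every facet `F ∈ F_n` other than `B`, and in the closed halfspace
`z ≥ 0` above the hyperplane spanned by `q(B)`. -/
theorem stmt13 (d : ℕ) (hd : 2 ≤ d) (n : ℕ) (hn : d + 1 ≤ n)
    (σ : ℕ → Finset ℕ)
    (hσ : ∀ i, d + 2 ≤ i → i ≤ n → σ i ∈ facets d σ (i - 1))
    (hB : ∀ i, d + 2 ≤ i → i ≤ n → σ i ≠ Finset.Icc 1 d)
    (q : ℕ → (Fin d → ℝ))
    -- `q` is a lifting of a flat embedding:
    (hbase : ∀ v, 1 ≤ v → v ≤ d → zc (q v) = 0)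
    (hindep : AffineIndependent ℝ (fun i : Fin d => projZ (q ((i : ℕ) + 1))))
    (hfirst : projZ (q (d + 1)) ∈
      interior (convexHull ℝ ((fun v => projZ (q v)) '' (Finset.Icc 1 d))))
    (hstack : ∀ i, d + 2 ≤ i → i ≤ n →
      projZ (q i) ∈ interior (convexHull ℝ ((fun v => projZ (q v)) '' (σ i))))
    -- all `z`-coordinates are nonnegative:
    (hz : ∀ v, 1 ≤ v → v ≤ n → 0 ≤ zc (q v))
    -- sign conditions on the stresses of all ridges:
    (hstress : ∀ F ∈ facets d σ n, ∀ G ∈ facets d σ n, F ≠ G →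
      (F ∩ G).card = d - 1 →
      ∀ Xs : Fin (d - 1) → ℕ, Function.Injective Xs → (∀ j, Xs j ∈ F ∩ G) →
      ∀ s ∈ F, s ∉ G →
      ∀ zF zG : (Fin (d - 1) → ℝ) →ᵃ[ℝ] ℝ,
        (∀ v ∈ F, zF (projZ (q v)) = zc (q v)) →
        (∀ v ∈ G, zG (projZ (q v)) = zc (q v)) →
        0 < (if F = Finset.Icc 1 d then (-1 : ℝ) else 1) *
          pdet (snoc' (fun j => q (Xs j)) (q s)) →
        (if F = Finset.Icc 1 d ∨ G = Finset.Icc 1 d then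
          (zG (projZ (q s)) - zF (projZ (q s))) /
            pdet (snoc' (fun j => q (Xs j)) (q s)) < 0
        else
          0 < (zG (projZ (q s)) - zF (projZ (q s))) /
            pdet (snoc' (fun j => q (Xs j)) (q s)))) :
    -- conclusion: `q` realizes a convex polytope
    (∀ F ∈ facets d σ n, F ≠ Finset.Icc 1 d →
      ∀ zF : (Fin (d - 1) → ℝ) →ᵃ[ℝ] ℝ,
        (∀ v ∈ F, zF (projZ (q v)) = zc (q v)) →
        ∀ v, 1 ≤ v → v ≤ n → zc (q v) ≤ zF (projZ (q v))) ∧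
    (∀ v, 1 ≤ v → v ≤ n → 0 ≤ zc (q v)) := by
  classical
  refine ⟨?_, hz⟩
  intro F hF hFneB zF hzF v hv1 hvn
  open Stk in
  have hg : Stk.Good d q σ hd n := Stk.good_all d q σ hd n hn hσ hB hindep hfirst hstack
  have hFlike := hg.glike F hF
  rcases hg.gmem v (Finset.mem_Icc.2 ⟨hv1, hvn⟩) with ⟨Gb, hGbf, hGbneB, hvGb⟩
  have hGblike := hg.glike Gb hGbf
  set b := projZ (q v) with hbdef
  set cpt := Finset.univ.affineCombination ℝ (Stk.fbasis q hd Gb hGblike)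
      (fun _ : ↑Gb => (d:ℝ)⁻¹) with hcptdef
  have hdR : (0:ℝ) < d := by
    have : 0 < d := by omega
    exact_mod_cast this
  have hcard : (Finset.univ : Finset ↑Gb).card = d := by
    rw [Finset.card_univ, Fintype.card_coe, hGblike.1]
  have hsum1 : ∑ _u : ↑Gb, (d:ℝ)⁻¹ = 1 := by
    rw [Finset.sum_const, hcard, nsmul_eq_mul]
    field_simp
  have hcoord_cpt : ∀ u : ↑Gb, (Stk.fbasis q hd Gb hGblike).coord u cpt = (d:ℝ)⁻¹ := by
    intro u
    rw [hcptdef, Finset.map_affineCombination _ _ _ hsum1,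
      Finset.univ.affineCombination_eq_linear_combination _ _ hsum1]
    rw [Finset.sum_eq_single u]
    · simp [AffineBasis.coord_apply]
    · intro w _ hwu
      have hne : u ≠ w := fun he => hwu he.symm
      simp [AffineBasis.coord_apply, hne]
    · intro hcon
      exact absurd (Finset.mem_univ _) hcon
  have hcoord_b : ∀ u : ↑Gb, 0 ≤ (Stk.fbasis q hd Gb hGblike).coord u b := by
    intro u
    rw [hbdef]
    by_cases huv : u = (⟨v, hvGb⟩ : ↑Gb)
    · rw [huv, Stk.fbasis_coord_self q hd Gb hGblike]
      norm_num
    · rw [Stk.fbasis_coord_ne q hd Gb hGblike u ⟨v, hvGb⟩ huv]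
  have hGbsubΔ : Stk.cellq q Gb ⊆ Stk.cellq q (Finset.Icc 1 d) := by
    apply convexHull_min
    · rintro z ⟨w, hw, rfl⟩
      exact hg.gdelta w (hg.gsub Gb hGbf hw)
    · exact convex_convexHull ℝ _
  have hbΔ : b ∈ Stk.cellq q (Finset.Icc 1 d) := hg.gdelta v (Finset.mem_Icc.2 ⟨hv1, hvn⟩)
  have hcptΔ : cpt ∈ Stk.cellq q (Finset.Icc 1 d) := by
    apply hGbsubΔ
    apply Stk.mem_cell_of_coords_nonneg q hd hGblike
    intro u
    rw [hcoord_cpt]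
    positivity
  -- THE KEY CLAIM
  have key : ∀ ε : ℝ, 0 < ε → ε < 1 → ∀ H0, ∀ hH0f : H0 ∈ facets d σ n,
      H0 ≠ Finset.Icc 1 d →
      Stk.zmap q hd Gb hGblike (AffineMap.lineMap b cpt ε) ≤
        Stk.zmap q hd H0 (hg.glike H0 hH0f) (AffineMap.lineMap b cpt ε) := by
    intro ε hε0 hε1 H0 hH0f hH0neB
    set bε := AffineMap.lineMap b cpt ε with hbεdef
    have hbεΔ : bε ∈ Stk.cellq q (Finset.Icc 1 d) :=
      (convex_convexHull ℝ _).lineMap_mem hbΔ hcptΔ ⟨le_of_lt hε0, le_of_lt hε1⟩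
    set S := (facets d σ n).erase (Finset.Icc 1 d) with hSdef
    have hGbS : Gb ∈ S := Finset.mem_erase.2 ⟨hGbneB, hGbf⟩
    set zval : Finset ℕ → ℝ := fun K =>
      if hK : K ∈ facets d σ n then Stk.zmap q hd K (hg.glike K hK) bε else 0 with hzvaldef
    have hzvaleq : ∀ K, ∀ hK : K ∈ facets d σ n,
        zval K = Stk.zmap q hd K (hg.glike K hK) bε := by
      intro K hK
      rw [hzvaldef]
      exact dif_pos hK
    rcases Finset.exists_min_image S zval ⟨Gb, hGbS⟩ with ⟨Hm, hHmS, hmin⟩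
    have hHmf : Hm ∈ facets d σ n := (Finset.mem_erase.1 hHmS).2
    have hHmneB : Hm ≠ Finset.Icc 1 d := (Finset.mem_erase.1 hHmS).1
    have hHmlike := hg.glike Hm hHmf
    have hpos : ∀ u : ↑Hm, 0 ≤ (Stk.fbasis q hd Hm hHmlike).coord u bε := by
      by_contra hc
      push_neg at hc
      rcases hc with ⟨⟨u0, hu0⟩, hneg⟩
      by_cases hwB : Hm.erase u0 ⊆ Finset.Icc 1 d
      · -- boundary wall
        have hBlike := hg.glike _ hg.gB
        have hcardX : (Hm.erase u0).card = d - 1 := by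
          rw [Finset.card_erase_of_mem hu0, hHmlike.1]
        have hnsub : ¬ (Finset.Icc 1 d ⊆ Hm.erase u0) := by
          intro hsub
          have := Finset.card_le_card hsub
          rw [hcardX, Nat.card_Icc] at this
          omega
        rcases Finset.not_subset.1 hnsub with ⟨x0, hx0B, hx0X⟩
        have hXeq : Hm.erase u0 = (Finset.Icc 1 d).erase x0 := by
          apply Finset.eq_of_subset_of_card_le
          · intro w hw
            exact Finset.mem_erase.2 ⟨fun he => hx0X (he ▸ hw), hwB hw⟩
          · rw [Finset.card_erase_of_mem hx0B, Nat.card_Icc, hcardX]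
            omega
        set g := (Stk.fbasis q hd (Finset.Icc 1 d) hBlike).coord ⟨x0, hx0B⟩ with hgdef
        set c := (Stk.fbasis q hd Hm hHmlike).coord ⟨u0, hu0⟩ (projZ (q x0)) with hcdef
        have hidc : ∀ p, (Stk.fbasis q hd Hm hHmlike).coord ⟨u0, hu0⟩ p = c * g p := by
          intro p
          have heval := Stk.affine_eq_on_basis (Stk.fbasis q hd (Finset.Icc 1 d) hBlike)
            (f := (Stk.fbasis q hd Hm hHmlike).coord ⟨u0, hu0⟩) (g := c • g) ?_ p
          · rw [heval]
            simp [AffineMap.coe_smul]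
          · rintro ⟨w, hw⟩
            rw [show (Stk.fbasis q hd (Finset.Icc 1 d) hBlike) ⟨w, hw⟩ = projZ (q w) from rfl]
            simp only [AffineMap.coe_smul, Pi.smul_apply, smul_eq_mul]
            by_cases hwx0 : w = x0
            · subst hwx0
              have h1 : g (projZ (q w)) = 1 := Stk.fbasis_coord_self q hd _ hBlike ⟨w, hw⟩
              rw [h1, mul_one, hcdef]
            · have hwX : w ∈ Hm.erase u0 := by
                rw [hXeq]
                exact Finset.mem_erase.2 ⟨hwx0, hw⟩
              have h1 : (Stk.fbasis q hd Hm hHmlike).coord ⟨u0, hu0⟩ (projZ (q w)) = 0 :=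
                Stk.fbasis_coord_ne q hd Hm hHmlike ⟨u0, hu0⟩
                  ⟨w, Finset.mem_of_mem_erase hwX⟩
                  (fun he => (Finset.mem_erase.1 hwX).1 (congrArg Subtype.val he).symm)
              have h2 : g (projZ (q w)) = 0 :=
                Stk.fbasis_coord_ne q hd _ hBlike ⟨x0, hx0B⟩ ⟨w, hw⟩
                  (fun he => hwx0 (congrArg Subtype.val he).symm)
              rw [h1, h2, mul_zero]
        have hu0n : u0 ∈ Finset.Icc 1 n := hg.gsub Hm hHmf hu0
        have hgu0 : 0 ≤ g (projZ (q u0)) :=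
          Stk.coords_nonneg_of_mem_cell q hd hBlike (hg.gdelta u0 hu0n) ⟨x0, hx0B⟩
        have h1 : (1:ℝ) = c * g (projZ (q u0)) := by
          rw [← hidc]
          exact (Stk.fbasis_coord_self q hd Hm hHmlike ⟨u0, hu0⟩).symm
        have hcpos : 0 < c := by nlinarith
        have hgbε : 0 ≤ g bε :=
          Stk.coords_nonneg_of_mem_cell q hd hBlike hbεΔ ⟨x0, hx0B⟩
        have : 0 ≤ (Stk.fbasis q hd Hm hHmlike).coord ⟨u0, hu0⟩ bε := by
          rw [hidc]
          exact mul_nonneg (le_of_lt hcpos) hgbε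
        linarith
      · -- interior wall: use the partner facet and the stress sign
        rcases hg.gridge Hm hHmf hHmneB u0 hu0 hwB with
          ⟨G, hGf, hGneB, hGHm, t, htG, htHm, hside⟩
        have hGlike := hg.glike G hGf
        have hν := Stk.nu_pos q σ hd hstress hHmf hGf hHmneB hGneB hHmlike hGlike
          hu0 hGHm htG htHm hside
        have hid := Stk.partner_identity q hd hHmlike hGlike hu0 hGHm bε
        have hlt : Stk.zmap q hd G hGlike bε < Stk.zmap q hd Hm hHmlike bε := by
          rw [hid]
          nlinarith
        have hGS : G ∈ S := Finset.mem_erase.2 ⟨hGneB, hGf⟩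
        have hmin' := hmin G hGS
        rw [hzvaleq G hGf, hzvaleq Hm hHmf] at hmin'
        linarith
    have hbεHm : bε ∈ Stk.cellq q Hm := Stk.mem_cell_of_coords_nonneg q hd hHmlike hpos
    have hHmGb : Hm = Gb := by
      by_contra hne
      rcases hg.gdisj Gb hGbf Hm hHmf hGbneB hHmneB (fun he => hne he.symm) bε hbεHm with
        ⟨u, hu, hbound⟩
      have hle := hbound _ (Stk.coord_isWallMap q hd Gb hGblike u hu)
      have hgt : 0 < (Stk.fbasis q hd Gb hGblike).coord ⟨u, hu⟩ bε := by
        have hexp : (Stk.fbasis q hd Gb hGblike).coord ⟨u, hu⟩ bε =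
            (Stk.fbasis q hd Gb hGblike).coord ⟨u, hu⟩ b +
              ε * ((Stk.fbasis q hd Gb hGblike).coord ⟨u, hu⟩ cpt -
                (Stk.fbasis q hd Gb hGblike).coord ⟨u, hu⟩ b) := by
          rw [hbεdef, AffineMap.apply_lineMap, AffineMap.lineMap_apply]
          simp only [vsub_eq_sub, vadd_eq_add, smul_eq_mul]
          ring
        rw [hexp, hcoord_cpt ⟨u, hu⟩]
        have h1 := hcoord_b ⟨u, hu⟩
        have h2 : 0 < (d:ℝ)⁻¹ := by positivity
        nlinarith [mul_nonneg (by linarith : (0:ℝ) ≤ 1 - ε) h1, mul_pos hε0 h2]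
      linarith
    have hmin'' := hmin H0 (Finset.mem_erase.2 ⟨hH0neB, hH0f⟩)
    rw [hzvaleq H0 hH0f, hzvaleq Hm hHmf] at hmin''
    subst hHmGb
    exact hmin''
  -- pass to the limit ε → 0
  have hfinal : Stk.zmap q hd Gb hGblike b ≤ Stk.zmap q hd F hFlike b := by
    by_contra hlt
    push_neg at hlt
    set zG' := Stk.zmap q hd Gb hGblike with hzG'
    set zF' := Stk.zmap q hd F hFlike with hzF'
    set δ := zG' b - zF' b with hδ
    have hδpos : 0 < δ := by rw [hδ]; linarith
    set K := (zF' cpt - zF' b) - (zG' cpt - zG' b) with hK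
    set ε := min (1/2 : ℝ) (δ / (2 * (|K| + 1))) with hε
    have hKpos : 0 < |K| + 1 := by positivity
    have hε0 : 0 < ε := by
      apply lt_min
      · norm_num
      · positivity
    have hε1 : ε < 1 := lt_of_le_of_lt (min_le_left _ _) (by norm_num)
    have hkey := key ε hε0 hε1 F hF hFneB
    have hlineG : zG' (AffineMap.lineMap b cpt ε) = zG' b + ε * (zG' cpt - zG' b) := by
      rw [AffineMap.apply_lineMap, AffineMap.lineMap_apply]
      simp only [vsub_eq_sub, vadd_eq_add, smul_eq_mul]
      ring
    have hlineF : zF' (AffineMap.lineMap b cpt ε) = zF' b + ε * (zF' cpt - zF' b) := by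
      rw [AffineMap.apply_lineMap, AffineMap.lineMap_apply]
      simp only [vsub_eq_sub, vadd_eq_add, smul_eq_mul]
      ring
    rw [hlineG, hlineF] at hkey
    -- δ ≤ ε * K
    have h2 : δ ≤ ε * K := by
      rw [hδ, hK]
      nlinarith [hkey]
    have h3 : ε * K ≤ ε * (|K| + 1) := by
      have := le_abs_self K
      nlinarith
    have h4 : ε ≤ δ / (2 * (|K| + 1)) := min_le_right _ _
    have h5 : ε * (|K| + 1) ≤ δ / 2 := by
      have h4' : ε * (2 * (|K| + 1)) ≤ δ := by
        rw [← le_div_iff₀ (by positivity : (0:ℝ) < 2 * (|K| + 1))]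
        exact h4
      have h4'' : 2 * (ε * (|K| + 1)) ≤ δ := by
        calc 2 * (ε * (|K| + 1)) = ε * (2 * (|K| + 1)) := by ring
          _ ≤ δ := h4'
      linarith
    linarith
  -- conclude
  have h1 : zc (q v) = Stk.zmap q hd Gb hGblike b := (Stk.zmap_vertex q hd Gb hGblike v hvGb).symm
  have h2 : zF (projZ (q v)) = Stk.zmap q hd F hFlike (projZ (q v)) :=
    Stk.interpolant_unique q hd F hFlike hzF (projZ (q v))
  rw [h2, h1]
  exact hfinal
end
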